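/- arXiv:1605.01322 — 6 statements merged into one kernel-verified Lean document; each statement's English description precedes it below -/
import Mathlib

section
/- If a finite abstract simplicial complex K admits a cover by n+1 categorical subcomplexes, then K admits a cover by n+1 categorical subcomplexes each of which is a union of maximal simplices of K, and moreover such that each maximal simplex of K is contained in exactly one element of the cover. -/
/-- An abstract simplicial complex on a vertex type `V`:
a downward-closed family of nonempty finite sets of vertices. -/
structure AbsSC (V : Type) where
  faces : Set (Finset V)
  nonempty_of_mem : ∀ σ ∈ faces, σ.Nonempty
  down_closed : ∀ σ ∈ faces, ∀ τ : Finset V, τ ⊆ σ → τ.Nonempty → τ ∈ faces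

namespace AbsSC

variable {V W V' W' : Type} [DecidableEq V] [DecidableEq W]

/-- `f` is a simplicial map from `K` to `L`. -/
def IsSimplicial (K : AbsSC V) (L : AbsSC W) (f : V → W) : Prop :=
  ∀ σ ∈ K.faces, σ.image f ∈ L.faces

/-- Two simplicial maps are contiguous. -/
def Contig (K : AbsSC V) (L : AbsSC W) (f g : V → W) : Prop :=
  IsSimplicial K L f ∧ IsSimplicial K L g ∧
    ∀ σ ∈ K.faces, σ.image f ∪ σ.image g ∈ L.faces

/-- Two maps are in the same contiguity class: they are connected by a
finite chain of pairwise contiguous simplicial maps. -/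
def ContigClass (K : AbsSC V) (L : AbsSC W) : (V → W) → (V → W) → Prop :=
  Relation.ReflTransGen (Contig K L)

/-- `U` is a categorical subcomplex of `K`: the inclusion is in the
contiguity class of a constant map onto a vertex of `K`. -/
def Categorical (K U : AbsSC V) : Prop :=
  U.faces ⊆ K.faces ∧ ∃ v : V, {v} ∈ K.faces ∧ ContigClass U K id (fun _ => v)

/-- `K` is covered by `n+1` categorical subcomplexes. -/
def CatCover (K : AbsSC V) (n : ℕ) : Prop :=
  ∃ U : Fin (n + 1) → AbsSC V, (∀ i, Categorical K (U i)) ∧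
    ∀ σ ∈ K.faces, ∃ i, σ ∈ (U i).faces

/-- The simplicial Lusternik–Schnirelmann category of `K`. -/
noncomputable def scat (K : AbsSC V) : ℕ := sInf {n | CatCover K n}

/-- A maximal simplex of `K`. -/
def MaximalFace (K : AbsSC V) (σ : Finset V) : Prop :=
  σ ∈ K.faces ∧ ∀ τ ∈ K.faces, σ ⊆ τ → σ = τ

/-- The vertex `v` is dominated (by some other vertex `v'`). -/
def Dominated (K : AbsSC V) (v : V) : Prop :=
  ∃ v' : V, v' ≠ v ∧ {v} ∈ K.faces ∧ {v'} ∈ K.faces ∧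
    ∀ σ : Finset V, MaximalFace K σ → v ∈ σ → v' ∈ σ

/-- A minimal complex: no vertex is dominated. -/
def Minimal (K : AbsSC V) : Prop := ∀ v : V, ¬ Dominated K v

/-- Deleting (the open star of) a vertex. -/
def delete (K : AbsSC V) (v : V) : AbsSC V where
  faces := {σ ∈ K.faces | v ∉ σ}
  nonempty_of_mem := fun σ h => K.nonempty_of_mem σ h.1
  down_closed := fun σ h τ hτ hne =>
    ⟨K.down_closed σ h.1 τ hτ hne, fun hv => h.2 (hτ hv)⟩

/-- An elementary strong collapse: removal of the open star of a dominated vertex. -/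
def ElemStrongCollapse (K L : AbsSC V) : Prop :=
  ∃ v : V, Dominated K v ∧ L = K.delete v

/-- A complex consisting of a single vertex. -/
def IsPoint (K : AbsSC V) : Prop := ∃ v : V, K.faces = {{v}}

/-- `K` is strongly collapsible: it reduces to a single vertex by a
sequence of elementary strong collapses. -/
def StronglyCollapsible (K : AbsSC V) : Prop :=
  ∃ L : AbsSC V, Relation.ReflTransGen ElemStrongCollapse K L ∧ IsPoint L

/-- `K` is covered by `n+1` subcomplexes, each strongly collapsible in itself. -/
def GCatCover (K : AbsSC V) (n : ℕ) : Prop :=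
  ∃ U : Fin (n + 1) → AbsSC V,
    (∀ i, (U i).faces ⊆ K.faces ∧ StronglyCollapsible (U i)) ∧
    ∀ σ ∈ K.faces, ∃ i, σ ∈ (U i).faces

/-- The geometric simplicial category of `K`. -/
noncomputable def gscat (K : AbsSC V) : ℕ := sInf {n | GCatCover K n}

/-- Strong homotopy equivalence of complexes. -/
def StrongEquiv (K : AbsSC V) (L : AbsSC W) : Prop :=
  ∃ (φ : V → W) (ψ : W → V), IsSimplicial K L φ ∧ IsSimplicial L K ψ ∧
    ContigClass K K (ψ ∘ φ) id ∧ ContigClass L L (φ ∘ ψ) id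

/-- The barycentric subdivision: vertices are the simplices of `K`,
simplices are the chains of simplices of `K`. -/
def sd (K : AbsSC V) : AbsSC (Finset V) where
  faces := {S | S.Nonempty ∧ (∀ σ ∈ S, σ ∈ K.faces) ∧
    ∀ σ ∈ S, ∀ τ ∈ S, σ ⊆ τ ∨ τ ⊆ σ}
  nonempty_of_mem := fun S hS => hS.1
  down_closed := fun S hS T hTS hT =>
    ⟨hT, fun σ hσ => hS.2.1 σ (hTS hσ),
      fun σ hσ τ hτ => hS.2.2 σ (hTS hσ) τ (hTS hτ)⟩

/-- The categorical product of simplicial complexes. -/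
def prod (K : AbsSC V) (L : AbsSC W) : AbsSC (V × W) where
  faces := {σ | σ.Nonempty ∧ σ.image Prod.fst ∈ K.faces ∧ σ.image Prod.snd ∈ L.faces}
  nonempty_of_mem := fun σ h => h.1
  down_closed := fun σ h τ hτ hne =>
    ⟨hne, K.down_closed _ h.2.1 _ (Finset.image_subset_image hτ) (hne.image _),
      L.down_closed _ h.2.2 _ (Finset.image_subset_image hτ) (hne.image _)⟩

/-- The `n`-fold categorical power of `K`. -/
def power (K : AbsSC V) (n : ℕ) : AbsSC (Fin n → V) where
  faces := {σ | σ.Nonempty ∧ ∀ j : Fin n, σ.image (fun f => f j) ∈ K.faces}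
  nonempty_of_mem := fun σ h => h.1
  down_closed := by
    intro σ h τ hτ hne
    exact ⟨hne, fun j => K.down_closed _ (h.2 j) _ (Finset.image_subset_image hτ) (hne.image _)⟩

/-- The `n`-th fat wedge of a pointed complex `(K, v₀)` inside `Kⁿ`. -/
def fatWedge (K : AbsSC V) (n : ℕ) (v₀ : V) : AbsSC (Fin n → V) where
  faces := {σ | σ ∈ (K.power n).faces ∧ ∃ j : Fin n, ∀ f ∈ σ, f j = v₀}
  nonempty_of_mem := fun σ h => (K.power n).nonempty_of_mem σ h.1
  down_closed := fun σ h τ hτ hne =>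
    ⟨(K.power n).down_closed σ h.1 τ hτ hne,
      h.2.imp fun j hj f hf => hj f (hτ hf)⟩

/-- The part of a set of vertices of a disjoint union lying in the left factor. -/
noncomputable def sumLeft (σ : Finset (V ⊕ W)) : Finset V :=
  σ.preimage Sum.inl Sum.inl_injective.injOn

/-- The part of a set of vertices of a disjoint union lying in the right factor. -/
noncomputable def sumRight (σ : Finset (V ⊕ W)) : Finset W :=
  σ.preimage Sum.inr Sum.inr_injective.injOn

/-- The simplicial join `K ∗ L`. -/
def join (K : AbsSC V) (L : AbsSC W) : AbsSC (V ⊕ W) where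
  faces := {σ | σ.Nonempty ∧ ((sumLeft σ).Nonempty → sumLeft σ ∈ K.faces) ∧
    ((sumRight σ).Nonempty → sumRight σ ∈ L.faces)}
  nonempty_of_mem := fun σ h => h.1
  down_closed := by
    intro σ h τ hτ hne
    have hl : sumLeft τ ⊆ sumLeft σ := fun x hx => by
      rw [sumLeft, Finset.mem_preimage] at *; exact hτ hx
    have hr : sumRight τ ⊆ sumRight σ := fun x hx => by
      rw [sumRight, Finset.mem_preimage] at *; exact hτ hx
    exact ⟨hne,
      fun h1 => K.down_closed _ (h.2.1 (h1.mono hl)) _ hl h1,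
      fun h1 => L.down_closed _ (h.2.2 (h1.mono hr)) _ hr h1⟩

/-- A graph: a simplicial complex of dimension at most 1. -/
def IsGraph (G : AbsSC V) : Prop := ∀ σ ∈ G.faces, σ.card ≤ 2

/-- A connected (nonempty) complex: any two vertices are joined by an edge path. -/
def ConnectedG (G : AbsSC V) : Prop :=
  G.faces.Nonempty ∧
    ∀ u v : V, {u} ∈ G.faces → {v} ∈ G.faces →
      ∃ (n : ℕ) (p : Fin (n + 1) → V), p 0 = u ∧ p (Fin.last n) = v ∧
        ∀ i : Fin n, ({p i.castSucc, p i.succ} : Finset V) ∈ G.faces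

/-- A cycle of length `n` in a graph: `n ≥ 3` distinct vertices joined cyclically by edges. -/
def IsCycle (G : AbsSC V) (n : ℕ) (p : ZMod n → V) : Prop :=
  3 ≤ n ∧ Function.Injective p ∧
    ∀ i : ZMod n, ({p i, p (i + 1)} : Finset V) ∈ G.faces

/-- A forest: a graph containing no cycle. -/
def IsForest (G : AbsSC V) : Prop := ∀ (n : ℕ) (p : ZMod n → V), ¬ IsCycle G n p

/-- A tree: a connected forest. -/
def IsTree (G : AbsSC V) : Prop := IsForest G ∧ ConnectedG G

/-- A decomposition of a graph into `k` edge-disjoint spanning forests. -/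
def EdgeDisjointForestDecomp (G : AbsSC V) (k : ℕ) : Prop :=
  ∃ F : Fin k → AbsSC V,
    (∀ i, (F i).faces ⊆ G.faces ∧ IsForest (F i) ∧
      ∀ v : V, {v} ∈ G.faces → {v} ∈ (F i).faces) ∧
    (∀ σ ∈ G.faces, ∃ i, σ ∈ (F i).faces) ∧
    ∀ (i j : Fin k) (σ : Finset V), σ.card = 2 →
      σ ∈ (F i).faces → σ ∈ (F j).faces → i = j

/-- The arboricity of a graph. -/
noncomputable def arboricity (G : AbsSC V) : ℕ :=
  sInf {k | EdgeDisjointForestDecomp G k}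

end AbsSC

open AbsSC in
lemma categorical_of_subset {V : Type} [DecidableEq V] (K U U' : AbsSC V)
    (hsub : U'.faces ⊆ U.faces) (h : Categorical K U) : Categorical K U' := by
  obtain ⟨hUK, v, hv, hc⟩ := h
  refine ⟨fun σ hσ => hUK (hsub hσ), v, hv, ?_⟩
  refine Relation.ReflTransGen.mono (p := Contig U' K) (fun f g hfg => ?_) _ _ hc
  obtain ⟨h1, h2, h3⟩ := hfg
  exact ⟨fun σ hσ => h1 σ (hsub hσ), fun σ hσ => h2 σ (hsub hσ),
    fun σ hσ => h3 σ (hsub hσ)⟩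

open AbsSC in
lemma exists_maximal_superset {V : Type} [DecidableEq V] [Fintype V]
    (K : AbsSC V) {τ : Finset V} (hτ : τ ∈ K.faces) :
    ∃ σ : Finset V, MaximalFace K σ ∧ τ ⊆ σ := by
  classical
  obtain ⟨σ, hσ, hmax⟩ := Finset.exists_max_image
    (Finset.univ.powerset.filter (fun σ => σ ∈ K.faces ∧ τ ⊆ σ)) Finset.card
    ⟨τ, by simp [hτ]⟩
  simp only [Finset.mem_filter] at hσ
  refine ⟨σ, ⟨hσ.2.1, fun ρ hρ hsub => ?_⟩, hσ.2.2⟩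
  have hρmem : ρ ∈ Finset.univ.powerset.filter (fun σ => σ ∈ K.faces ∧ τ ⊆ σ) := by
    simp [hρ, hσ.2.2.trans hsub]
  exact Finset.eq_of_subset_of_card_le hsub (hmax ρ hρmem)

/-- a categorical cover can be replaced by one whose members are
unions of maximal simplices, each maximal simplex lying in exactly one member. -/
theorem catCover_maximal {V : Type} [DecidableEq V] [Fintype V]
    (K : AbsSC V) (n : ℕ) (h : AbsSC.CatCover K n) :
    ∃ U : Fin (n + 1) → AbsSC V,
      (∀ i, AbsSC.Categorical K (U i)) ∧
      (∀ σ ∈ K.faces, ∃ i, σ ∈ (U i).faces) ∧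
      (∀ i, ∀ τ ∈ (U i).faces, ∃ σ : Finset V,
        AbsSC.MaximalFace K σ ∧ σ ∈ (U i).faces ∧ τ ⊆ σ) ∧
      (∀ σ : Finset V, AbsSC.MaximalFace K σ → ∃! i, σ ∈ (U i).faces) := by
  classical
  obtain ⟨U, hcat, hcov⟩ := h
  -- choice of an index for each maximal face
  have hchoice : ∀ σ : Finset V, AbsSC.MaximalFace K σ → ∃ i, σ ∈ (U i).faces :=
    fun σ hσ => hcov σ hσ.1
  set f : Finset V → Fin (n + 1) := fun σ =>
    if h : ∃ i, σ ∈ (U i).faces then h.choose else 0 with hf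
  have hfmem : ∀ σ : Finset V, AbsSC.MaximalFace K σ → σ ∈ (U (f σ)).faces := by
    intro σ hσ
    have h' := hchoice σ hσ
    simp only [hf, dif_pos h']
    exact h'.choose_spec
  -- the new cover
  refine ⟨fun i => ⟨{τ | τ.Nonempty ∧ ∃ σ, AbsSC.MaximalFace K σ ∧ f σ = i ∧ τ ⊆ σ},
    fun τ hτ => hτ.1, fun τ hτ ρ hρ hne => ⟨hne, hτ.2.imp
      fun σ hσ => ⟨hσ.1, hσ.2.1, hρ.trans hσ.2.2⟩⟩⟩, ?_, ?_, ?_, ?_⟩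
  · intro i
    refine categorical_of_subset K (U i) _ ?_ (hcat i)
    rintro τ ⟨hne, σ, hσ, rfl, hsub⟩
    exact (U (f σ)).down_closed σ (hfmem σ hσ) τ hsub hne
  · intro σ hσ
    obtain ⟨ρ, hρ, hsub⟩ := exists_maximal_superset K hσ
    exact ⟨f ρ, K.nonempty_of_mem σ hσ, ρ, hρ, rfl, hsub⟩
  · rintro i τ ⟨hne, σ, hσ, rfl, hsub⟩
    exact ⟨σ, hσ, ⟨K.nonempty_of_mem σ hσ.1, σ, hσ, rfl, subset_rfl⟩, hsub⟩
  · intro σ hσ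
    refine ⟨f σ, ⟨K.nonempty_of_mem σ hσ.1, σ, hσ, rfl, subset_rfl⟩, ?_⟩
    rintro i ⟨-, ρ, hρ, rfl, hsub⟩
    rw [hσ.2 ρ hρ.1 hsub]
end

section
/- For any finite abstract simplicial complex K, the simplicial LS-category scat K is strictly less than the number of vertices of the core K₀ of K, and also strictly less than the number of maximal simplices of K₀. -/
namespace AbsSC

section Aux
variable {V V' W : Type} [DecidableEq V] [DecidableEq V'] [DecidableEq W]

lemma contig_symm {K : AbsSC V} {L : AbsSC W} {f g : V → W} (h : Contig K L f g) :
    Contig K L g f :=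
  ⟨h.2.1, h.1, fun σ hσ => by rw [Finset.union_comm]; exact h.2.2 σ hσ⟩

lemma contigClass_symm {K : AbsSC V} {L : AbsSC W} {f g : V → W}
    (h : ContigClass K L f g) : ContigClass K L g f :=
  by haveI : Std.Symm (Contig K L) := ⟨fun _ _ => contig_symm⟩; exact Relation.ReflTransGen.symmetric.symm _ _ h

lemma contigClass_restrict {K U : AbsSC V} {L : AbsSC W} (hU : U.faces ⊆ K.faces)
    {f g : V → W} (h : ContigClass K L f g) : ContigClass U L f g :=
  Relation.ReflTransGen.mono (fun a b hab =>
    ⟨fun σ hσ => hab.1 σ (hU hσ), fun σ hσ => hab.2.1 σ (hU hσ),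
     fun σ hσ => hab.2.2 σ (hU hσ)⟩) _ _ h

lemma contig_post {U : AbsSC V} {L : AbsSC V'} {M : AbsSC W}
    {ψ : V' → W} (hψ : IsSimplicial L M ψ) {f g : V → V'} (h : Contig U L f g) :
    Contig U M (ψ ∘ f) (ψ ∘ g) := by
  refine ⟨fun σ hσ => ?_, fun σ hσ => ?_, fun σ hσ => ?_⟩
  · rw [← Finset.image_image]; exact hψ _ (h.1 σ hσ)
  · rw [← Finset.image_image]; exact hψ _ (h.2.1 σ hσ)
  · have := hψ _ (h.2.2 σ hσ)
    rwa [Finset.image_union, Finset.image_image, Finset.image_image] at this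

lemma contigClass_post {U : AbsSC V} {L : AbsSC V'} {M : AbsSC W}
    {ψ : V' → W} (hψ : IsSimplicial L M ψ) {f g : V → V'} (h : ContigClass U L f g) :
    ContigClass U M (ψ ∘ f) (ψ ∘ g) :=
  Relation.ReflTransGen.lift (fun p => ψ ∘ p) (fun _ _ hab => contig_post hψ hab) _ _ h

lemma contig_pre {N : AbsSC V} {U : AbsSC V'} {L : AbsSC W}
    {φ : V → V'} (hφ : IsSimplicial N U φ) {f g : V' → W} (h : Contig U L f g) :
    Contig N L (f ∘ φ) (g ∘ φ) := by
  refine ⟨fun σ hσ => ?_, fun σ hσ => ?_, fun σ hσ => ?_⟩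
  · rw [← Finset.image_image]; exact h.1 _ (hφ σ hσ)
  · rw [← Finset.image_image]; exact h.2.1 _ (hφ σ hσ)
  · have := h.2.2 _ (hφ σ hσ)
    rwa [Finset.image_image, Finset.image_image] at this

lemma contigClass_pre {N : AbsSC V} {U : AbsSC V'} {L : AbsSC W}
    {φ : V → V'} (hφ : IsSimplicial N U φ) {f g : V' → W} (h : ContigClass U L f g) :
    ContigClass N L (f ∘ φ) (g ∘ φ) :=
  Relation.ReflTransGen.lift (fun p => p ∘ φ) (fun _ _ hab => contig_pre hφ hab) _ _ h

/-- Pullback of a subcomplex along a simplicial map. -/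
def pullback (K : AbsSC V) (U : AbsSC V') (φ : V → V') : AbsSC V where
  faces := {σ | σ ∈ K.faces ∧ σ.image φ ∈ U.faces}
  nonempty_of_mem := fun σ h => K.nonempty_of_mem σ h.1
  down_closed := fun σ h τ hτ hne =>
    ⟨K.down_closed σ h.1 τ hτ hne,
     U.down_closed _ h.2 _ (Finset.image_subset_image hτ) (hne.image _)⟩

lemma catCover_of_strongEquiv {K K₀ : AbsSC V} (heq : StrongEquiv K K₀) {n : ℕ}
    (h : CatCover K₀ n) : CatCover K n := by
  obtain ⟨φ, ψ, hφ, hψ, hK, -⟩ := heq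
  obtain ⟨U, hcat, hcov⟩ := h
  refine ⟨fun i => pullback K (U i) φ, fun i => ?_, fun σ hσ => ?_⟩
  · obtain ⟨hsub, v₀, hv₀, hchain⟩ := hcat i
    refine ⟨fun σ hσ => hσ.1, ψ v₀, ?_, ?_⟩
    · have := hψ _ hv₀; rwa [Finset.image_singleton] at this
    · have hWsub : (pullback K (U i) φ).faces ⊆ K.faces := fun σ hσ => hσ.1
      have h1 : ContigClass (pullback K (U i) φ) K id (ψ ∘ φ) :=
        contigClass_symm (contigClass_restrict hWsub hK)
      have hφW : IsSimplicial (pullback K (U i) φ) (U i) φ := fun σ hσ => hσ.2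
      have h2 : ContigClass (pullback K (U i) φ) K₀ (id ∘ φ) ((fun _ => v₀) ∘ φ) :=
        contigClass_pre hφW hchain
      have h3 : ContigClass (pullback K (U i) φ) K (ψ ∘ (id ∘ φ)) (ψ ∘ ((fun _ => v₀) ∘ φ)) :=
        contigClass_post hψ h2
      exact h1.trans h3
  · obtain ⟨i, hi⟩ := hcov _ (hφ σ hσ)
    exact ⟨i, hσ, hi⟩

/-- The closed star of a vertex. -/
def star (K : AbsSC V) (v : V) : AbsSC V where
  faces := {σ | σ ∈ K.faces ∧ insert v σ ∈ K.faces}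
  nonempty_of_mem := fun σ h => K.nonempty_of_mem σ h.1
  down_closed := fun σ h τ hτ hne =>
    ⟨K.down_closed σ h.1 τ hτ hne,
     K.down_closed _ h.2 _ (Finset.insert_subset_insert v hτ) ⟨v, Finset.mem_insert_self v τ⟩⟩

lemma star_categorical (K : AbsSC V) {v : V} (hv : ({v} : Finset V) ∈ K.faces) :
    Categorical K (star K v) := by
  refine ⟨fun σ hσ => hσ.1, v, hv, Relation.ReflTransGen.single ?_⟩
  refine ⟨fun σ hσ => by rw [Finset.image_id]; exact hσ.1, fun σ hσ => ?_, fun σ hσ => ?_⟩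
  · rw [Finset.image_const (K.nonempty_of_mem σ hσ.1)]; exact hv
  · rw [Finset.image_id, Finset.image_const (K.nonempty_of_mem σ hσ.1)]
    have hs : σ ∪ {v} ⊆ insert v σ := by
      intro x hx
      rcases Finset.mem_union.1 hx with h | h
      · exact Finset.mem_insert_of_mem h
      · rw [Finset.mem_singleton.1 h]; exact Finset.mem_insert_self v σ
    exact K.down_closed _ hσ.2 _ hs ⟨v, by simp⟩

/-- The full subcomplex of faces contained in a given face. -/
def below (K : AbsSC V) (s : Finset V) : AbsSC V where
  faces := {σ | σ ∈ K.faces ∧ σ ⊆ s}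
  nonempty_of_mem := fun σ h => K.nonempty_of_mem σ h.1
  down_closed := fun σ h τ hτ hne => ⟨K.down_closed σ h.1 τ hτ hne, hτ.trans h.2⟩

lemma below_categorical (K : AbsSC V) {s : Finset V} (hs : s ∈ K.faces) :
    Categorical K (below K s) := by
  obtain ⟨v, hv⟩ := K.nonempty_of_mem s hs
  have hvf : ({v} : Finset V) ∈ K.faces :=
    K.down_closed s hs {v} (Finset.singleton_subset_iff.2 hv) ⟨v, Finset.mem_singleton_self v⟩
  refine ⟨fun σ hσ => hσ.1, v, hvf, Relation.ReflTransGen.single ?_⟩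
  refine ⟨fun σ hσ => by rw [Finset.image_id]; exact hσ.1, fun σ hσ => ?_, fun σ hσ => ?_⟩
  · rw [Finset.image_const (K.nonempty_of_mem σ hσ.1)]; exact hvf
  · rw [Finset.image_id, Finset.image_const (K.nonempty_of_mem σ hσ.1)]
    have hsub : σ ∪ {v} ⊆ s := by
      intro x hx
      rcases Finset.mem_union.1 hx with h | h
      · exact hσ.2 h
      · rw [Finset.mem_singleton.1 h]; exact hv
    exact K.down_closed s hs _ hsub ⟨v, by simp⟩

lemma exists_maximalFace [Fintype V] (K : AbsSC V) {τ : Finset V} (hτ : τ ∈ K.faces) :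
    ∃ σ, MaximalFace K σ ∧ τ ⊆ σ := by
  classical
  obtain ⟨σ, hσ, hmax⟩ := Finset.exists_max_image
    (Finset.univ.filter fun ρ => ρ ∈ K.faces ∧ τ ⊆ ρ) Finset.card ⟨τ, by simp [hτ]⟩
  simp only [Finset.mem_filter, Finset.mem_univ, true_and] at hσ
  refine ⟨σ, ⟨hσ.1, fun ρ hρ hsub => ?_⟩, hσ.2⟩
  exact Finset.eq_of_subset_of_card_le hsub (hmax ρ (by simp [hρ, hσ.2.trans hsub]))

lemma catCover_of_fintype {ι : Type} [Fintype ι] [Nonempty ι] (K : AbsSC V)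
    (U : ι → AbsSC V) (hcat : ∀ i, Categorical K (U i))
    (hcov : ∀ σ ∈ K.faces, ∃ i, σ ∈ (U i).faces) :
    CatCover K (Fintype.card ι - 1) := by
  have hc : Fintype.card ι - 1 + 1 = Fintype.card ι :=
    Nat.succ_pred_eq_of_pos Fintype.card_pos
  let e : Fin (Fintype.card ι - 1 + 1) ≃ ι := (finCongr hc).trans (Fintype.equivFin ι).symm
  refine ⟨fun i => U (e i), fun i => hcat _, fun σ hσ => ?_⟩
  obtain ⟨i, hi⟩ := hcov σ hσ
  refine ⟨e.symm i, ?_⟩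
  show σ ∈ (U (e (e.symm i))).faces
  rw [Equiv.apply_symm_apply]; exact hi

end Aux

end AbsSC

/-- `scat K` is strictly less than the number of vertices and
the number of maximal simplices of the core `K₀` of `K`. -/
theorem scat_lt_core_bounds {V : Type} [DecidableEq V] [Fintype V]
    (K K₀ : AbsSC V) (hne : K.faces.Nonempty) (hsub : K₀.faces ⊆ K.faces)
    (hmin : AbsSC.Minimal K₀) (heq : AbsSC.StrongEquiv K K₀) :
    AbsSC.scat K < {v : V | ({v} : Finset V) ∈ K₀.faces}.ncard ∧
    AbsSC.scat K < {σ : Finset V | AbsSC.MaximalFace K₀ σ}.ncard := by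
  classical
  obtain ⟨σK, hσK⟩ := hne
  have h0 : K₀.faces.Nonempty := by
    obtain ⟨φ, ψ, hφ, hψ, -, -⟩ := heq
    exact ⟨σK.image φ, hφ σK hσK⟩
  obtain ⟨σ₀, hσ₀⟩ := h0
  have hv₀ : ∃ v : V, ({v} : Finset V) ∈ K₀.faces := by
    obtain ⟨v, hv⟩ := K₀.nonempty_of_mem σ₀ hσ₀
    exact ⟨v, K₀.down_closed σ₀ hσ₀ {v} (Finset.singleton_subset_iff.2 hv)
      ⟨v, Finset.mem_singleton_self v⟩⟩
  constructor
  · -- vertex bound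
    set S : Set V := {v : V | ({v} : Finset V) ∈ K₀.faces} with hS
    haveI : Nonempty S := by obtain ⟨v, hv⟩ := hv₀; exact ⟨⟨v, hv⟩⟩
    haveI : Fintype S := Fintype.ofFinite _
    have hcard : Fintype.card S = S.ncard := by
      rw [← Nat.card_coe_set_eq, Nat.card_eq_fintype_card]
    have hcover : AbsSC.CatCover K₀ (Fintype.card S - 1) := by
      refine AbsSC.catCover_of_fintype K₀ (fun v => AbsSC.star K₀ v.1)
        (fun v => AbsSC.star_categorical K₀ v.2) (fun σ hσ => ?_)
      obtain ⟨v, hv⟩ := K₀.nonempty_of_mem σ hσ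
      have hvf : ({v} : Finset V) ∈ K₀.faces :=
        K₀.down_closed σ hσ {v} (Finset.singleton_subset_iff.2 hv)
          ⟨v, Finset.mem_singleton_self v⟩
      exact ⟨⟨v, hvf⟩, hσ, by rwa [Finset.insert_eq_self.2 hv]⟩
    have hle : AbsSC.scat K ≤ Fintype.card S - 1 :=
      Nat.sInf_le (AbsSC.catCover_of_strongEquiv heq hcover)
    calc AbsSC.scat K ≤ Fintype.card S - 1 := hle
      _ < Fintype.card S := Nat.sub_lt Fintype.card_pos one_pos
      _ = S.ncard := hcard
  · -- maximal face bound
    set S : Set (Finset V) := {σ : Finset V | AbsSC.MaximalFace K₀ σ} with hS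
    haveI : Nonempty S := by
      obtain ⟨σ, hσ, -⟩ := AbsSC.exists_maximalFace K₀ hσ₀
      exact ⟨⟨σ, hσ⟩⟩
    haveI : Fintype S := Fintype.ofFinite _
    have hcard : Fintype.card S = S.ncard := by
      rw [← Nat.card_coe_set_eq, Nat.card_eq_fintype_card]
    have hcover : AbsSC.CatCover K₀ (Fintype.card S - 1) := by
      refine AbsSC.catCover_of_fintype K₀ (fun s => AbsSC.below K₀ s.1)
        (fun s => AbsSC.below_categorical K₀ s.2.1) (fun σ hσ => ?_)
      obtain ⟨ρ, hρ, hσρ⟩ := AbsSC.exists_maximalFace K₀ hσ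
      exact ⟨⟨ρ, hρ⟩, hσ, hσρ⟩
    have hle : AbsSC.scat K ≤ Fintype.card S - 1 :=
      Nat.sInf_le (AbsSC.catCover_of_strongEquiv heq hcover)
    calc AbsSC.scat K ≤ Fintype.card S - 1 := hle
      _ < Fintype.card S := Nat.sub_lt Fintype.card_pos one_pos
      _ = S.ncard := hcard
end

section
/- If two simplicial maps φ, ψ : K → L between finite simplicial complexes are in the same contiguity class, then the induced maps sd φ, sd ψ : sd K → sd L on the barycentric subdivisions are in the same contiguity class. -/
namespace SdContigAux

open AbsSC

variable {V W : Type} [DecidableEq V] [DecidableEq W]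

lemma contig_symm {K : AbsSC V} {L : AbsSC W} {f g : V → W} (h : Contig K L f g) :
    Contig K L g f :=
  ⟨h.2.1, h.1, fun σ hσ => by rw [Finset.union_comm]; exact h.2.2 σ hσ⟩

/-- Interpolating maps between `sd f` and the "union" map. -/
def mix (f g : V → W) (i : ℕ) : Finset V → Finset W :=
  fun σ => if σ.card ≤ i then σ.image f else σ.image f ∪ σ.image g

lemma mix_mem {K : AbsSC V} {L : AbsSC W} {f g : V → W} (hfg : Contig K L f g)
    (i : ℕ) {σ : Finset V} (hσ : σ ∈ K.faces) : mix f g i σ ∈ L.faces := by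
  unfold mix
  split
  · exact hfg.1 σ hσ
  · exact hfg.2.2 σ hσ

lemma mix_chain {f g : V → W} {σ τ : Finset V} (hst : σ ⊆ τ) {j k : ℕ}
    (hk : k ≤ j + 1) : mix f g j σ ⊆ mix f g k τ ∨ mix f g k τ ⊆ mix f g j σ := by
  unfold mix
  by_cases hj : σ.card ≤ j
  · rw [if_pos hj]
    left
    split
    · exact Finset.image_subset_image hst
    · exact (Finset.image_subset_image hst).trans Finset.subset_union_left
  · rw [if_neg hj]
    by_cases hk' : τ.card ≤ k
    · rw [if_pos hk']
      have hcard : τ.card ≤ σ.card := by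
        have h1 : j + 1 ≤ σ.card := Nat.lt_of_not_le hj
        omega
      have : σ = τ := Finset.eq_of_subset_of_card_le hst hcard
      subst this
      exact Or.inr Finset.subset_union_left
    · rw [if_neg hk']
      left
      exact Finset.union_subset_union (Finset.image_subset_image hst)
        (Finset.image_subset_image hst)

lemma mix_isSimplicial {K : AbsSC V} {L : AbsSC W} {f g : V → W}
    (hfg : Contig K L f g) (i : ℕ) :
    IsSimplicial (sd K) (sd L) (mix f g i) := by
  intro S hS
  obtain ⟨hne, hmem, hchain⟩ := hS
  refine ⟨hne.image _, ?_, ?_⟩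
  · intro a ha
    simp only [Finset.mem_image] at ha
    obtain ⟨σ, hσ, rfl⟩ := ha
    exact mix_mem hfg i (hmem σ hσ)
  · intro a ha b hb
    simp only [Finset.mem_image] at ha hb
    obtain ⟨σ, hσ, rfl⟩ := ha
    obtain ⟨τ, hτ, rfl⟩ := hb
    rcases hchain σ hσ τ hτ with h | h
    · exact mix_chain h (Nat.le_succ i)
    · exact (mix_chain h (Nat.le_succ i)).symm

lemma mix_contig {K : AbsSC V} {L : AbsSC W} {f g : V → W}
    (hfg : Contig K L f g) (i : ℕ) :
    Contig (sd K) (sd L) (mix f g i) (mix f g (i + 1)) := by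
  refine ⟨mix_isSimplicial hfg i, mix_isSimplicial hfg (i + 1), ?_⟩
  intro S hS
  obtain ⟨hne, hmem, hchain⟩ := hS
  refine ⟨(hne.image _).mono Finset.subset_union_left, ?_, ?_⟩
  · intro a ha
    rcases Finset.mem_union.mp ha with ha | ha <;>
    · simp only [Finset.mem_image] at ha
      obtain ⟨σ, hσ, rfl⟩ := ha
      exact mix_mem hfg _ (hmem σ hσ)
  · intro a ha b hb
    have key : ∀ (j k : ℕ), k ≤ j + 1 → j ≤ k + 1 →
        ∀ c ∈ S.image (mix f g j), ∀ d ∈ S.image (mix f g k), c ⊆ d ∨ d ⊆ c := by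
      intro j k hjk hkj c hc d hd
      simp only [Finset.mem_image] at hc hd
      obtain ⟨σ, hσ, rfl⟩ := hc
      obtain ⟨τ, hτ, rfl⟩ := hd
      rcases hchain σ hσ τ hτ with h | h
      · exact mix_chain h hjk
      · exact (mix_chain h hkj).symm
    rcases Finset.mem_union.mp ha with ha | ha <;> rcases Finset.mem_union.mp hb with hb | hb
    · exact key i i (Nat.le_succ i) (Nat.le_succ i) a ha b hb
    · exact key i (i + 1) le_rfl (by omega) a ha b hb
    · exact key (i + 1) i (by omega) le_rfl a ha b hb
    · exact key (i + 1) (i + 1) (Nat.le_succ _) (Nat.le_succ _) a ha b hb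

/-- Going up the chain of interpolating maps. -/
lemma mix_class_up {K : AbsSC V} {L : AbsSC W} {f g : V → W}
    (hfg : Contig K L f g) (n : ℕ) :
    ContigClass (sd K) (sd L) (mix f g 0) (mix f g n) := by
  induction n with
  | zero => exact Relation.ReflTransGen.refl
  | succ n ih => exact ih.tail (mix_contig hfg n)

lemma mix_zero (f g : V → W) : mix f g 0 = mix g f 0 := by
  funext σ
  unfold mix
  by_cases h : σ.card ≤ 0
  · have : σ = ∅ := Finset.card_eq_zero.mp (Nat.le_zero.mp h)
    subst this; simp
  · rw [if_neg h, if_neg h, Finset.union_comm]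

lemma mix_top [Fintype V] (f g : V → W) :
    mix f g (Fintype.card V) = fun σ => σ.image f := by
  funext σ
  unfold mix
  rw [if_pos]
  exact (Finset.card_le_univ σ).trans_eq Finset.card_univ

/-- A single contiguity gives a contiguity class between subdivided maps. -/
lemma sd_contig [Fintype V] {K : AbsSC V} {L : AbsSC W} {f g : V → W}
    (hfg : Contig K L f g) :
    ContigClass (sd K) (sd L) (fun σ => σ.image f) (fun σ => σ.image g) := by
  have h1 : ContigClass (sd K) (sd L) (mix f g (Fintype.card V)) (mix f g 0) := by
    have := mix_class_up hfg (Fintype.card V)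
    haveI hsymm : Std.Symm (Contig (sd K) (sd L)) := ⟨fun _ _ h => contig_symm h⟩
    exact (Relation.ReflTransGen.stdSymm (r := Contig (sd K) (sd L))).symm _ _ this
  have h2 : ContigClass (sd K) (sd L) (mix g f 0) (mix g f (Fintype.card V)) :=
    mix_class_up (contig_symm hfg) (Fintype.card V)
  rw [← mix_top f g, ← mix_top g f]
  exact h1.trans (mix_zero f g ▸ h2)

end SdContigAux

/-- barycentric subdivision preserves contiguity classes. -/
theorem sd_contigClass {V W : Type} [DecidableEq V] [DecidableEq W]
    [Fintype V] [Fintype W]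
    (K : AbsSC V) (L : AbsSC W) (φ ψ : V → W)
    (hφ : AbsSC.IsSimplicial K L φ) (hψ : AbsSC.IsSimplicial K L ψ)
    (h : AbsSC.ContigClass K L φ ψ) :
    AbsSC.ContigClass (AbsSC.sd K) (AbsSC.sd L)
      (fun σ => σ.image φ) (fun σ => σ.image ψ) := by
  clear hφ hψ
  induction h with
  | refl => exact Relation.ReflTransGen.refl
  | tail _ hbc ih => exact ih.trans (SdContigAux.sd_contig hbc)
end

section
/- For any finite abstract simplicial complex K, scat(sd K) ≤ scat K, where sd K is the first barycentric subdivision. -/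
namespace AbsSCAux

open AbsSC

variable {V : Type} [DecidableEq V]

/-- Barycentric subdivision of a vertex map. -/
def sdmap (f : V → V) : Finset V → Finset V := fun σ => σ.image f

lemma sdmap_simplicial {U K : AbsSC V} {f : V → V} (hf : IsSimplicial U K f) :
    IsSimplicial (sd U) (sd K) (sdmap f) := by
  rintro S ⟨hne, hmem, hchain⟩
  refine ⟨hne.image _, ?_, ?_⟩
  · intro σ hσ
    obtain ⟨τ, hτ, rfl⟩ := Finset.mem_image.1 hσ
    exact hf τ (hmem τ hτ)
  · intro σ hσ τ hτ
    obtain ⟨σ', hσ', rfl⟩ := Finset.mem_image.1 hσ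
    obtain ⟨τ', hτ', rfl⟩ := Finset.mem_image.1 hτ
    rcases hchain σ' hσ' τ' hτ' with h | h
    · exact Or.inl (Finset.image_subset_image h)
    · exact Or.inr (Finset.image_subset_image h)

/-- Interpolating maps between `sdmap f` and `σ ↦ f(σ) ∪ g(σ)`. -/
noncomputable def hmap (f g : V → V) (k : ℕ) : Finset V → Finset V :=
  fun σ => if k ≤ σ.card then σ.image f ∪ σ.image g else σ.image f

lemma image_subset_hmap (f g : V → V) (k : ℕ) {σ τ : Finset V} (h : σ ⊆ τ) :
    σ.image f ⊆ hmap f g k τ := by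
  unfold hmap
  split
  · exact (Finset.image_subset_image h).trans Finset.subset_union_left
  · exact Finset.image_subset_image h

lemma hmap_mono (f g : V → V) (k : ℕ) {σ τ : Finset V} (h : σ ⊆ τ) :
    hmap f g k σ ⊆ hmap f g k τ := by
  unfold hmap
  by_cases hk : k ≤ σ.card
  · rw [if_pos hk, if_pos (hk.trans (Finset.card_le_card h))]
    exact Finset.union_subset_union (Finset.image_subset_image h) (Finset.image_subset_image h)
  · rw [if_neg hk]
    exact image_subset_hmap f g k h

lemma hmap_succ_subset (f g : V → V) (k : ℕ) (σ : Finset V) :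
    hmap f g (k + 1) σ ⊆ hmap f g k σ := by
  unfold hmap
  by_cases hk : k + 1 ≤ σ.card
  · rw [if_pos hk, if_pos ((Nat.le_succ k).trans hk)]
  · rw [if_neg hk]
    split
    · exact Finset.subset_union_left
    · exact subset_rfl

/-- Key comparability: `hmap k σ` vs `hmap (k+1) τ` when `σ ⊆ τ`. -/
lemma hmap_aux (f g : V → V) (k : ℕ) {σ τ : Finset V} (h : σ ⊆ τ) :
    hmap f g k σ ⊆ hmap f g (k + 1) τ ∨ hmap f g (k + 1) τ ⊆ hmap f g k σ := by
  by_cases hk : k ≤ σ.card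
  · by_cases he : σ = τ
    · subst he; exact Or.inr (hmap_succ_subset f g k σ)
    · left
      have hlt : σ.card < τ.card := Finset.card_lt_card (lt_of_le_of_ne h he)
      have h2 : k + 1 ≤ τ.card := Nat.succ_le_of_lt (lt_of_le_of_lt hk hlt)
      rw [hmap, hmap, if_pos hk, if_pos h2]
      exact Finset.union_subset_union (Finset.image_subset_image h) (Finset.image_subset_image h)
  · left
    rw [hmap, if_neg hk]
    exact image_subset_hmap f g (k + 1) h

lemma hmap_face {U K : AbsSC V} {f g : V → V} (hfg : Contig U K f g) (k : ℕ)
    {σ : Finset V} (hσ : σ ∈ U.faces) : hmap f g k σ ∈ K.faces := by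
  unfold hmap
  split
  · exact hfg.2.2 σ hσ
  · exact hfg.1 σ hσ

lemma hmap_simplicial {U K : AbsSC V} {f g : V → V} (hfg : Contig U K f g) (k : ℕ) :
    IsSimplicial (sd U) (sd K) (hmap f g k) := by
  rintro S ⟨hne, hmem, hchain⟩
  refine ⟨hne.image _, ?_, ?_⟩
  · intro σ hσ
    obtain ⟨τ, hτ, rfl⟩ := Finset.mem_image.1 hσ
    exact hmap_face hfg k (hmem τ hτ)
  · intro σ hσ τ hτ
    obtain ⟨σ', hσ', rfl⟩ := Finset.mem_image.1 hσ
    obtain ⟨τ', hτ', rfl⟩ := Finset.mem_image.1 hτ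
    rcases hchain σ' hσ' τ' hτ' with h | h
    · exact Or.inl (hmap_mono f g k h)
    · exact Or.inr (hmap_mono f g k h)

lemma hmap_contig {U K : AbsSC V} {f g : V → V} (hfg : Contig U K f g) (k : ℕ) :
    Contig (sd U) (sd K) (hmap f g (k + 1)) (hmap f g k) := by
  refine ⟨hmap_simplicial hfg (k + 1), hmap_simplicial hfg k, ?_⟩
  rintro S ⟨hne, hmem, hchain⟩
  constructor
  · exact ⟨hmap f g (k+1) hne.choose, Finset.mem_union_left _
      (Finset.mem_image_of_mem _ hne.choose_spec)⟩
  constructor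
  · intro σ hσ
    rcases Finset.mem_union.1 hσ with h | h <;>
    · obtain ⟨τ, hτ, rfl⟩ := Finset.mem_image.1 h
      exact hmap_face hfg _ (hmem τ hτ)
  · intro x hx y hy
    have step2 : ∀ σ τ : Finset V, σ ∈ S → τ ∈ S →
        hmap f g (k + 1) σ ⊆ hmap f g k τ ∨ hmap f g k τ ⊆ hmap f g (k + 1) σ := by
      intro σ τ hσS hτS
      rcases hchain σ hσS τ hτS with h | h
      · exact Or.inl ((hmap_succ_subset f g k σ).trans (hmap_mono f g k h))
      · rcases hmap_aux f g k h with h' | h'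
        · exact Or.inr h'
        · exact Or.inl h'
    rcases Finset.mem_union.1 hx with hx | hx <;> rcases Finset.mem_union.1 hy with hy | hy <;>
      obtain ⟨σ, hσS, rfl⟩ := Finset.mem_image.1 hx <;>
      obtain ⟨τ, hτS, rfl⟩ := Finset.mem_image.1 hy
    · rcases hchain σ hσS τ hτS with h | h
      · exact Or.inl (hmap_mono f g (k + 1) h)
      · exact Or.inr (hmap_mono f g (k + 1) h)
    · exact step2 σ τ hσS hτS
    · rcases step2 τ σ hτS hσS with h | h
      · exact Or.inr h
      · exact Or.inl h
    · rcases hchain σ hσS τ hτS with h | h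
      · exact Or.inl (hmap_mono f g k h)
      · exact Or.inr (hmap_mono f g k h)

lemma contigClass_hmap {U K : AbsSC V} {f g : V → V} (hfg : Contig U K f g) (k : ℕ) :
    ContigClass (sd U) (sd K) (hmap f g k) (hmap f g 0) := by
  induction k with
  | zero => exact Relation.ReflTransGen.refl
  | succ n ih => exact Relation.ReflTransGen.head (hmap_contig hfg n) ih

lemma sdmap_eq_hmap_big [Fintype V] (f g : V → V) :
    sdmap f = hmap f g (Fintype.card V + 1) := by
  funext σ
  rw [hmap, if_neg]
  · rfl
  · exact fun h => absurd (Finset.card_le_univ σ) (by omega)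

lemma hmap_zero_comm (f g : V → V) : hmap f g 0 = hmap g f 0 := by
  funext σ
  rw [hmap, hmap, if_pos (Nat.zero_le _), if_pos (Nat.zero_le _), Finset.union_comm]

lemma contig_symm {U K : AbsSC V} {f g : V → V} (h : Contig U K f g) : Contig U K g f :=
  ⟨h.2.1, h.1, fun σ hσ => Finset.union_comm (σ.image f) (σ.image g) ▸ h.2.2 σ hσ⟩

lemma contigClass_symm {U K : AbsSC V} {f g : V → V} (h : ContigClass U K f g) :
    ContigClass U K g f :=
  haveI : Std.Symm (Contig U K) := ⟨fun _ _ hc => contig_symm hc⟩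
  Std.Symm.symm (r := Relation.ReflTransGen (Contig U K)) _ _ h

lemma contig_sdmap [Fintype V] {U K : AbsSC V} {f g : V → V} (hfg : Contig U K f g) :
    ContigClass (sd U) (sd K) (sdmap f) (sdmap g) := by
  have h1 : ContigClass (sd U) (sd K) (sdmap f) (hmap f g 0) := by
    rw [sdmap_eq_hmap_big f g]
    exact contigClass_hmap hfg _
  have h2 : ContigClass (sd U) (sd K) (sdmap g) (hmap g f 0) := by
    rw [sdmap_eq_hmap_big g f]
    exact contigClass_hmap (contig_symm hfg) _
  rw [hmap_zero_comm g f] at h2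
  exact h1.trans (contigClass_symm h2)

lemma contigClass_sdmap [Fintype V] {U K : AbsSC V} {f g : V → V}
    (h : ContigClass U K f g) : ContigClass (sd U) (sd K) (sdmap f) (sdmap g) := by
  induction h with
  | refl => exact Relation.ReflTransGen.refl
  | tail _ hbc ih => exact ih.trans (contig_sdmap hbc)

lemma categorical_sd [Fintype V] {K U : AbsSC V} (h : Categorical K U) :
    Categorical (sd K) (sd U) := by
  obtain ⟨hsub, v, hv, hcc⟩ := h
  refine ⟨?_, {v}, ?_, ?_⟩
  · rintro S ⟨hne, hmem, hchain⟩
    exact ⟨hne, fun σ hσ => hsub (hmem σ hσ), hchain⟩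
  · exact ⟨⟨{v}, Finset.mem_singleton_self _⟩,
      fun σ hσ => (Finset.mem_singleton.1 hσ) ▸ hv,
      fun σ hσ τ hτ => Or.inl (by
        rw [Finset.mem_singleton.1 hσ, Finset.mem_singleton.1 hτ])⟩
  · have h1 : ContigClass (sd U) (sd K) (sdmap id) (sdmap (fun _ => v)) :=
      contigClass_sdmap hcc
    have hid : sdmap (id : V → V) = id := by
      funext σ; exact Finset.image_id
    rw [hid] at h1
    refine h1.trans (Relation.ReflTransGen.single ?_)
    -- Contig (sd U) (sd K) (sdmap (const v)) (const {v})
    have himg : ∀ S ∈ (sd U).faces, S.image (sdmap (fun _ => v)) = {({v} : Finset V)} := by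
      rintro S ⟨hne, hmem, -⟩
      apply Finset.ext
      intro x
      simp only [Finset.mem_image, Finset.mem_singleton]
      constructor
      · rintro ⟨σ, hσ, rfl⟩
        exact Finset.image_const (U.nonempty_of_mem σ (hmem σ hσ)) v
      · rintro rfl
        obtain ⟨σ, hσ⟩ := hne
        exact ⟨σ, hσ, Finset.image_const (U.nonempty_of_mem σ (hmem σ hσ)) v⟩
    have hconst : ∀ S : Finset (Finset V), S.Nonempty →
        S.image (fun _ => ({v} : Finset V)) = {({v} : Finset V)} :=
      fun S hS => Finset.image_const hS _
    have hvface : ({({v} : Finset V)} : Finset (Finset V)) ∈ (sd K).faces :=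
      ⟨⟨{v}, Finset.mem_singleton_self _⟩,
        fun σ hσ => (Finset.mem_singleton.1 hσ) ▸ hv,
        fun σ hσ τ hτ => Or.inl (by
          rw [Finset.mem_singleton.1 hσ, Finset.mem_singleton.1 hτ])⟩
    refine ⟨?_, ?_, ?_⟩
    · intro S hS
      rw [himg S hS]
      exact hvface
    · rintro S hS
      rw [hconst S hS.1]
      exact hvface
    · intro S hS
      rw [himg S hS, hconst S hS.1, Finset.union_self]
      exact hvface

lemma catCover_sd [Fintype V] {K : AbsSC V} {n : ℕ} (h : CatCover K n) :
    CatCover (sd K) n := by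
  obtain ⟨U, hcat, hcov⟩ := h
  refine ⟨fun i => sd (U i), fun i => categorical_sd (hcat i), ?_⟩
  rintro S ⟨hne, hmem, hchain⟩
  obtain ⟨τ, hτS, hτmax⟩ := S.exists_maximal hne
  have hbig : ∀ σ ∈ S, σ ⊆ τ := by
    intro σ hσ
    rcases hchain σ hσ τ hτS with h | h
    · exact h
    · rcases eq_or_lt_of_le (Finset.le_iff_subset.2 h) with he | hlt
      · exact le_of_eq he.symm
      · exact absurd (hτmax hσ (Finset.lt_iff_ssubset.1 hlt).subset)
          (not_subset_of_ssubset (Finset.lt_iff_ssubset.1 hlt))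
  obtain ⟨i, hi⟩ := hcov τ (hmem τ hτS)
  refine ⟨i, hne, ?_, hchain⟩
  intro σ hσ
  exact (U i).down_closed τ hi σ (hbig σ hσ) (K.nonempty_of_mem σ (hmem σ hσ))

/-- The simplex subcomplex spanned by `τ`. -/
def cone (K : AbsSC V) (τ : Finset V) : AbsSC V where
  faces := {σ | σ ∈ K.faces ∧ σ ⊆ τ}
  nonempty_of_mem := fun σ h => K.nonempty_of_mem σ h.1
  down_closed := fun σ h ρ hρ hne =>
    ⟨K.down_closed σ h.1 ρ hρ hne, hρ.trans h.2⟩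

lemma cone_categorical (K : AbsSC V) {τ : Finset V} (hτ : τ ∈ K.faces) :
    Categorical K (cone K τ) := by
  obtain ⟨v, hv⟩ := K.nonempty_of_mem τ hτ
  have hvf : ({v} : Finset V) ∈ K.faces :=
    K.down_closed τ hτ {v} (Finset.singleton_subset_iff.2 hv) ⟨v, Finset.mem_singleton_self v⟩
  refine ⟨fun σ h => h.1, v, hvf, Relation.ReflTransGen.single ?_⟩
  refine ⟨?_, ?_, ?_⟩
  · intro σ hσ
    rw [Finset.image_id]
    exact hσ.1
  · intro σ hσ
    rw [Finset.image_const (K.nonempty_of_mem σ hσ.1) v]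
    exact hvf
  · intro σ hσ
    rw [Finset.image_id, Finset.image_const (K.nonempty_of_mem σ hσ.1) v]
    apply K.down_closed τ hτ
    · exact Finset.union_subset hσ.2 (Finset.singleton_subset_iff.2 hv)
    · exact ⟨v, Finset.mem_union_right _ (Finset.mem_singleton_self v)⟩

lemma catCover_exists [Fintype V] {K : AbsSC V} (hK : K.faces.Nonempty) :
    ∃ n, CatCover K n := by
  classical
  obtain ⟨τ₀, hτ₀⟩ := hK
  obtain ⟨e⟩ := Fintype.truncEquivFin (Finset V)
  set N := Fintype.card (Finset V) with hN
  have hN1 : 1 ≤ N := Fintype.card_pos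
  have hNe : N - 1 + 1 = N := Nat.succ_pred_eq_of_pos hN1
  set c : Fin (N - 1 + 1) → Finset V := fun i => e.symm (Fin.cast hNe i) with hc
  refine ⟨N - 1, fun i => cone K (if c i ∈ K.faces then c i else τ₀), ?_, ?_⟩
  · intro i
    apply cone_categorical
    split
    · assumption
    · exact hτ₀
  · intro σ hσ
    refine ⟨Fin.cast hNe.symm (e σ), ?_⟩
    have h1 : Fin.cast hNe (Fin.cast hNe.symm (e σ)) = e σ := by
      apply Fin.ext
      simp
    have h2 : c (Fin.cast hNe.symm (e σ)) = σ := by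
      rw [hc]
      simp only [h1, Equiv.symm_apply_apply]
    show σ ∈ (cone K (if c (Fin.cast hNe.symm (e σ)) ∈ K.faces
      then c (Fin.cast hNe.symm (e σ)) else τ₀)).faces
    rw [h2, if_pos hσ]
    exact ⟨hσ, subset_rfl⟩

end AbsSCAux

/-- `scat (sd K) ≤ scat K`. -/
theorem scat_sd_le {V : Type} [DecidableEq V] [Fintype V] (K : AbsSC V) :
    AbsSC.scat (AbsSC.sd K) ≤ AbsSC.scat K := by
  classical
  by_cases hK : K.faces.Nonempty
  · obtain ⟨m, hm⟩ := AbsSCAux.catCover_exists hK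
    have hA : {n | AbsSC.CatCover K n}.Nonempty := ⟨m, hm⟩
    have h1 : AbsSC.CatCover K (AbsSC.scat K) := Nat.sInf_mem hA
    exact Nat.sInf_le (AbsSCAux.catCover_sd h1)
  · have hempty : {n | AbsSC.CatCover (AbsSC.sd K) n} = ∅ := by
      apply Set.eq_empty_iff_forall_notMem.2
      intro n hn
      obtain ⟨U, hcat, -⟩ := hn
      obtain ⟨-, v, hv, -⟩ := hcat 0
      obtain ⟨-, hmem, -⟩ := hv
      exact hK ⟨v, hmem v (Finset.mem_singleton_self v)⟩
    rw [AbsSC.scat, hempty]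
    simp
end

section
/- For any finite abstract simplicial complex K, the topological LS-category of the geometric realization satisfies cat |K| ≤ scat K. -/
open scoped Classical in
/-- The geometric realization of `K`, as a subspace of `V → ℝ`. -/
noncomputable def AbsSC.geomReal {V : Type} [DecidableEq V] [Fintype V]
    (K : AbsSC V) : Set (V → ℝ) :=
  {f | (∀ v, 0 ≤ f v) ∧ (∑ v, f v) = 1 ∧
    (Finset.univ.filter fun v => f v ≠ 0) ∈ K.faces}

/-- `X` admits a cover by `n+1` open subsets, each contractible within `X`. -/
def TopCatCover (X : Type*) [TopologicalSpace X] (n : ℕ) : Prop :=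
  ∃ U : Fin (n + 1) → Set X, (∀ i, IsOpen (U i)) ∧ (∀ x, ∃ i, x ∈ U i) ∧
    ∀ i, ∃ x₀ : X, ContinuousMap.Homotopic
      (⟨Subtype.val, continuous_subtype_val⟩ : C(U i, X))
      (ContinuousMap.const _ x₀)

/-- The Lusternik–Schnirelmann category of a topological space. -/
noncomputable def topcat (X : Type*) [TopologicalSpace X] : ℕ :=
  sInf {n | TopCatCover X n}

section AuxPrivate
set_option linter.unusedSectionVars false

open Finset
variable {V : Type} [DecidableEq V] [Fintype V]

lemma cont_inf' (s : Finset V) (h : s.Nonempty) : Continuous (fun x : V → ℝ => s.inf' h x) := by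
  induction h using Finset.Nonempty.cons_induction with
  | singleton a => simpa using continuous_apply a
  | cons a s ha hs ih =>
      have he : (fun x : V → ℝ => (Finset.cons a s ha).inf' (Finset.cons_nonempty ha) x)
          = fun x : V → ℝ => min (x a) (s.inf' hs x) := by
        funext x; rw [Finset.inf'_cons]
      rw [he]; exact (continuous_apply a).min ih

lemma cont_sup' (s : Finset V) (h : s.Nonempty) : Continuous (fun x : V → ℝ => s.sup' h x) := by
  induction h using Finset.Nonempty.cons_induction with
  | singleton a => simpa using continuous_apply a
  | cons a s ha hs ih =>
      have he : (fun x : V → ℝ => (Finset.cons a s ha).sup' (Finset.cons_nonempty ha) x)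
          = fun x : V → ℝ => max (x a) (s.sup' hs x) := by
        funext x; rw [Finset.sup'_cons]
      rw [he]; exact (continuous_apply a).max ih

lemma inf'_min_const (s : Finset V) (h : s.Nonempty) (f : V → ℝ) (c : ℝ) :
    s.inf' h (fun v => min (f v) c) = min (s.inf' h f) c := by
  induction h using Finset.Nonempty.cons_induction with
  | singleton a => simp
  | cons a s ha hs ih =>
      rw [Finset.inf'_cons (f := fun v => min (f v) c) (H := hs), Finset.inf'_cons (f := f) (H := hs), ih]
      rw [min_assoc, min_comm c, min_assoc, min_self, ← min_assoc]

lemma sup'_min_const (s : Finset V) (h : s.Nonempty) (f : V → ℝ) (c : ℝ) :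
    s.sup' h (fun v => min (f v) c) = min (s.sup' h f) c := by
  induction h using Finset.Nonempty.cons_induction with
  | singleton a => simp
  | cons a s ha hs ih =>
      rw [Finset.sup'_cons (f := fun v => min (f v) c) (H := hs), Finset.sup'_cons (f := f) (H := hs), ih]
      exact (min_max_distrib_right (f a) (s.sup' hs f) c).symm

noncomputable def mOut (σ : Finset V) (x : V → ℝ) : ℝ :=
  if h : (σᶜ : Finset V).Nonempty then max 0 (σᶜ.sup' h x) else 0

noncomputable def posP (σ : Finset V) (x : V → ℝ) : ℝ :=
  if h : σ.Nonempty then max 0 (σ.inf' h x - mOut σ x) else 0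

lemma mOut_nonneg (σ : Finset V) (x : V → ℝ) : 0 ≤ mOut σ x := by
  unfold mOut; split <;> simp

lemma posP_nonneg (σ : Finset V) (x : V → ℝ) : 0 ≤ posP σ x := by
  unfold posP; split <;> simp

lemma le_mOut {σ : Finset V} {v : V} (hv : v ∉ σ) (x : V → ℝ) : x v ≤ mOut σ x := by
  have hv' : v ∈ σᶜ := Finset.mem_compl.2 hv
  rw [mOut, dif_pos ⟨v, hv'⟩]
  exact le_max_of_le_right (Finset.le_sup' x hv')

lemma mOut_le {σ : Finset V} {x : V → ℝ} {c : ℝ} (hc : 0 ≤ c)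
    (h : ∀ v ∉ σ, x v ≤ c) : mOut σ x ≤ c := by
  rw [mOut]; split
  · exact max_le hc (Finset.sup'_le _ _ fun v hv => h v (Finset.mem_compl.1 hv))
  · exact hc

lemma mOut_lt {σ : Finset V} {x : V → ℝ} {c : ℝ} (hc : 0 < c)
    (h : ∀ v ∉ σ, x v < c) : mOut σ x < c := by
  rw [mOut]; split
  · exact max_lt hc (Finset.sup'_lt_iff _ |>.2 fun v hv => h v (Finset.mem_compl.1 hv))
  · exact hc

lemma max0_min {c : ℝ} (hc : 0 ≤ c) (s : ℝ) : max 0 (min s c) = min (max 0 s) c := by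
  rcases le_total s 0 with h | h
  · rw [max_eq_left (min_le_of_left_le h), max_eq_left h, min_eq_left hc]
  · rw [max_eq_right (le_min h hc), max_eq_right h]

lemma mOut_min (σ : Finset V) (x : V → ℝ) {c : ℝ} (hc : 0 ≤ c) :
    mOut σ (fun v => min (x v) c) = min (mOut σ x) c := by
  unfold mOut; split
  · rw [sup'_min_const, max0_min hc]
  · rw [min_eq_left hc]

lemma posP_flatten (x : V → ℝ) (hx : ∀ v, 0 ≤ x v) (c₁ : ℝ) (hc₁ : 0 < c₁)
    (hmax : ∀ w, x w ≤ c₁) (hS : (Finset.univ.filter (fun v => x v = c₁)).Nonempty)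
    (σ : Finset V) :
    posP σ x = posP σ (fun v => min (x v) (mOut (Finset.univ.filter (fun v => x v = c₁)) x))
      + (if σ = Finset.univ.filter (fun v => x v = c₁) then
          c₁ - mOut (Finset.univ.filter (fun v => x v = c₁)) x else 0) := by
  set S₁ := Finset.univ.filter (fun v => x v = c₁) with hS₁def
  set c₂ := mOut S₁ x with hc₂def
  have hc₂0 : 0 ≤ c₂ := mOut_nonneg _ _
  have hc₂lt : c₂ < c₁ := by
    refine mOut_lt hc₁ fun v hv => ?_
    have : x v ≠ c₁ := by simpa [hS₁def] using hv
    exact lt_of_le_of_ne (hmax v) this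
  have hout : ∀ w ∉ S₁, x w ≤ c₂ := fun w hw => le_mOut hw x
  by_cases hσ : σ.Nonempty
  · have hne : σ ≠ S₁ → (if σ = S₁ then c₁ - c₂ else 0) = 0 := fun h => if_neg h
    rw [posP, dif_pos hσ, posP, dif_pos hσ, inf'_min_const, mOut_min _ _ hc₂0]
    set a := σ.inf' hσ x with hadef
    set b := mOut σ x with hbdef
    by_cases hsub : ∃ s ∈ S₁, s ∉ σ
    · obtain ⟨s, hs, hsσ⟩ := hsub
      have hσS : σ ≠ S₁ := fun h => hsσ (h ▸ hs)
      have hxs : x s = c₁ := by simpa [hS₁def] using hs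
      have hb : c₁ ≤ b := hxs ▸ le_mOut hsσ x
      have ha : a ≤ c₁ := by
        obtain ⟨u, hu⟩ := hσ
        exact le_trans (Finset.inf'_le x hu) (hmax u)
      rw [if_neg hσS, add_zero]
      rw [max_eq_left (by linarith), max_eq_left ?_]
      have : min b c₂ = c₂ := min_eq_right (by linarith)
      rw [this]
      have : min a c₂ ≤ c₂ := min_le_right _ _
      linarith
    · push_neg at hsub
      have hS₁σ : S₁ ⊆ σ := fun s hs => hsub s hs
      by_cases hEq : σ = S₁
      · subst hEq
        have ha : a = c₁ := by
          refine le_antisymm ?_ ?_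
          · obtain ⟨u, hu⟩ := hσ
            have : x u = c₁ := by simpa [hS₁def] using hu
            exact this ▸ Finset.inf'_le x hu
          · refine Finset.le_inf' _ _ fun u hu => ?_
            have : x u = c₁ := by simpa [hS₁def] using hu
            exact this.symm.le
        have hb : b = c₂ := rfl
        rw [if_pos rfl, ha, ← hb]
        rw [min_eq_right (by linarith), min_self, sub_self]
        rw [max_eq_right (by linarith), max_eq_left le_rfl]
        ring
      · obtain ⟨u, huσ, huS⟩ := Finset.exists_of_ssubset (hS₁σ.ssubset_of_ne (Ne.symm hEq))
        have ha : a ≤ c₂ := le_trans (Finset.inf'_le x huσ) (hout u huS)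
        have hb : b ≤ c₂ := mOut_le hc₂0 fun w hw => hout w (fun hws => hw (hS₁σ hws))
        rw [if_neg hEq, add_zero, min_eq_left ha, min_eq_left hb]
  · have hσ' : σ ≠ S₁ := by
      rintro rfl; exact hσ hS
    rw [posP, dif_neg hσ, posP, dif_neg hσ, if_neg hσ', add_zero]


lemma posP_zero (σ : Finset V) : posP σ (fun _ => (0:ℝ)) = 0 := by
  rw [posP]; split
  · have h1 : σ.inf' ‹_› (fun _ => (0:ℝ)) = 0 := Finset.inf'_const _ _
    have h2 : mOut σ (fun _ => (0:ℝ)) = 0 := by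
      rw [mOut]; split
      · rw [Finset.sup'_const]; simp
      · rfl
    rw [h1, h2]; simp
  · rfl

lemma sum_posP_aux : ∀ (k : ℕ) (x : V → ℝ), (∀ v, 0 ≤ x v) →
    ((Finset.univ.image x).filter (fun c => 0 < c)).card ≤ k →
    ∀ v, (∑ σ : Finset V, (if v ∈ σ then posP σ x else 0)) = x v := by
  intro k
  induction k with
  | zero =>
      intro x hx hcard v
      have hxz : x = fun _ => 0 := by
        funext w
        by_contra hw
        have hpos : 0 < x w := lt_of_le_of_ne (hx w) (Ne.symm hw)
        have hmem : x w ∈ (Finset.univ.image x).filter (fun c => 0 < c) := by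
          simp [Finset.mem_filter, hpos]
        have := Finset.card_pos.2 ⟨_, hmem⟩
        omega
      subst hxz
      simp [posP_zero]
  | succ k ih =>
      intro x hx hcard v
      by_cases hpos : ((Finset.univ.image x).filter (fun c => 0 < c)).Nonempty
      · set F := (Finset.univ.image x).filter (fun c => 0 < c) with hF
        set c₁ := F.max' hpos with hc₁def
        have hc₁F : c₁ ∈ F := F.max'_mem hpos
        have hc₁pos : 0 < c₁ := (Finset.mem_filter.1 hc₁F).2
        obtain ⟨w₁, _, hw₁⟩ := Finset.mem_image.1 (Finset.mem_filter.1 hc₁F).1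
        have hmax : ∀ w, x w ≤ c₁ := by
          intro w
          rcases eq_or_lt_of_le (hx w) with h | h
          · linarith
          · exact F.le_max' _ (by simp [hF, Finset.mem_filter, h])
        have hS : (Finset.univ.filter (fun v => x v = c₁)).Nonempty :=
          ⟨w₁, by simp [hw₁]⟩
        set S₁ := Finset.univ.filter (fun v => x v = c₁) with hS₁def
        set c₂ := mOut S₁ x with hc₂def
        have hc₂0 : 0 ≤ c₂ := mOut_nonneg _ _
        have hc₂lt : c₂ < c₁ := by
          refine mOut_lt hc₁pos fun u hu => ?_
          have : x u ≠ c₁ := by simpa [hS₁def] using hu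
          exact lt_of_le_of_ne (hmax u) this
        have hout : ∀ u, u ∉ S₁ → x u ≤ c₂ := fun u hu => le_mOut hu x
        set x' := fun u => min (x u) c₂ with hx'def
        have hx' : ∀ u, 0 ≤ x' u := fun u => le_min (hx u) hc₂0
        have hsubset : (Finset.univ.image x').filter (fun c => 0 < c) ⊆ F.erase c₁ := by
          intro c hc
          obtain ⟨hcim, hcpos⟩ := Finset.mem_filter.1 hc
          obtain ⟨u, _, hu⟩ := Finset.mem_image.1 hcim
          rcases le_total (x u) c₂ with h | h
          · have hcx : c = x u := by rw [← hu]; simp [hx'def, min_eq_left h]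
            refine Finset.mem_erase.2 ⟨?_, ?_⟩
            · rw [hcx]; exact ne_of_lt (lt_of_le_of_lt h hc₂lt)
            · exact Finset.mem_filter.2 ⟨Finset.mem_image.2 ⟨u, Finset.mem_univ u, hcx.symm⟩, hcpos⟩
          · have hcc₂ : c = c₂ := by rw [← hu]; simp [hx'def, min_eq_right h]
            subst hcc₂
            have hc₂im : c₂ ∈ Finset.univ.image x := by
              rw [hc₂def, mOut] at hcpos ⊢
              split at hcpos
              · rcases max_choice 0 ((S₁ᶜ).sup' ‹_› x) with hm | hm
                · rw [hm] at hcpos; exact absurd hcpos (lt_irrefl 0)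
                · obtain ⟨u', hu', hequ⟩ := Finset.exists_mem_eq_sup' ‹_› x
                  rw [dif_pos ‹_›, hm, hequ]
                  exact Finset.mem_image.2 ⟨u', Finset.mem_univ _, rfl⟩
              · exact absurd hcpos (lt_irrefl 0)
            exact Finset.mem_erase.2 ⟨ne_of_lt hc₂lt,
              Finset.mem_filter.2 ⟨hc₂im, hcpos⟩⟩
        have hcard' : ((Finset.univ.image x').filter (fun c => 0 < c)).card ≤ k := by
          have h1 := Finset.card_le_card hsubset
          have h2 : (F.erase c₁).card = F.card - 1 := Finset.card_erase_of_mem hc₁F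
          have h3 : 0 < F.card := Finset.card_pos.2 hpos
          omega
        have hih := ih x' hx' hcard' v
        calc (∑ σ : Finset V, (if v ∈ σ then posP σ x else 0))
            = ∑ σ : Finset V, ((if v ∈ σ then posP σ x' else 0)
                + (if v ∈ σ then (if σ = S₁ then c₁ - c₂ else 0) else 0)) := by
              refine Finset.sum_congr rfl fun σ _ => ?_
              by_cases hv : v ∈ σ
              · rw [if_pos hv, if_pos hv, if_pos hv]
                exact posP_flatten x hx c₁ hc₁pos hmax hS σ
              · simp [hv]
          _ = x' v + (if v ∈ S₁ then c₁ - c₂ else 0) := by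
              rw [Finset.sum_add_distrib, hih]
              congr 1
              have hsw : ∀ σ : Finset V, (if v ∈ σ then (if σ = S₁ then c₁ - c₂ else 0) else 0)
                  = if σ = S₁ then (if v ∈ S₁ then c₁ - c₂ else 0) else 0 := by
                intro σ
                by_cases h : σ = S₁
                · subst h; simp
                · simp [h]
              simp_rw [hsw]
              rw [Finset.sum_ite_eq' Finset.univ S₁ (fun _ => if v ∈ S₁ then c₁ - c₂ else 0)]
              simp
          _ = x v := by
              by_cases hv : v ∈ S₁
              · have hxv : x v = c₁ := by simpa [hS₁def] using hv
                rw [if_pos hv]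
                simp [hx'def, hxv, min_eq_right hc₂lt.le]
              · rw [if_neg hv, add_zero]
                simp [hx'def, min_eq_left (hout v hv)]
      · have hxz : x = fun _ => 0 := by
          funext w
          by_contra hw
          have hp : 0 < x w := lt_of_le_of_ne (hx w) (Ne.symm hw)
          exact hpos ⟨x w, by simp [Finset.mem_filter, hp]⟩
        subst hxz
        simp [posP_zero]

lemma sum_posP (x : V → ℝ) (hx : ∀ v, 0 ≤ x v) (v : V) :
    (∑ σ : Finset V, (if v ∈ σ then posP σ x else 0)) = x v :=
  sum_posP_aux _ x hx le_rfl v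

lemma posP_pos_elim {σ : Finset V} {x : V → ℝ} (h : 0 < posP σ x) :
    ∃ hσ : σ.Nonempty, mOut σ x < σ.inf' hσ x := by
  rw [posP] at h
  split at h
  · refine ⟨‹_›, ?_⟩
    rcases max_choice 0 (σ.inf' ‹_› x - mOut σ x) with hm | hm <;> rw [hm] at h
    · exact absurd h (lt_irrefl 0)
    · linarith [h]
  · exact absurd h (lt_irrefl 0)

lemma lt_of_mem_posP {σ : Finset V} {x : V → ℝ} {v : V} (h : 0 < posP σ x) (hv : v ∈ σ) :
    mOut σ x < x v := by
  obtain ⟨hσ, hlt⟩ := posP_pos_elim h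
  exact lt_of_lt_of_le hlt (Finset.inf'_le x hv)

lemma pos_of_mem_posP {σ : Finset V} {x : V → ℝ} {v : V} (h : 0 < posP σ x) (hv : v ∈ σ) :
    0 < x v := lt_of_le_of_lt (mOut_nonneg σ x) (lt_of_mem_posP h hv)

lemma posP_chain {σ τ : Finset V} {x : V → ℝ} (h1 : 0 < posP σ x) (h2 : 0 < posP τ x) :
    σ ⊆ τ ∨ τ ⊆ σ := by
  by_contra hcon
  push_neg at hcon
  obtain ⟨h3, h4⟩ := hcon
  obtain ⟨u, huσ, huτ⟩ := Finset.not_subset.1 h3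
  obtain ⟨w, hwτ, hwσ⟩ := Finset.not_subset.1 h4
  obtain ⟨hσ, hlt1⟩ := posP_pos_elim h1
  obtain ⟨hτ, hlt2⟩ := posP_pos_elim h2
  have e1 : x u ≤ mOut τ x := le_mOut huτ x
  have e2 : x w ≤ mOut σ x := le_mOut hwσ x
  have e3 := lt_of_mem_posP h1 huσ
  have e4 := lt_of_mem_posP h2 hwτ
  linarith

lemma cont_mOut (σ : Finset V) : Continuous (fun x : V → ℝ => mOut σ x) := by
  unfold mOut
  split
  · exact continuous_const.max (cont_sup' _ ‹_›)
  · exact continuous_const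

lemma cont_posP (σ : Finset V) : Continuous (fun x : V → ℝ => posP σ x) := by
  unfold posP
  split
  · exact continuous_const.max ((cont_inf' _ ‹_›).sub (cont_mOut σ))
  · exact continuous_const

lemma sum_card_posP (x : V → ℝ) (hx : ∀ v, 0 ≤ x v) :
    (∑ σ : Finset V, (σ.card : ℝ) * posP σ x) = ∑ v, x v := by
  have h1 : ∀ σ : Finset V, (σ.card : ℝ) * posP σ x
      = ∑ v, (if v ∈ σ then posP σ x else 0) := by
    intro σ
    rw [Finset.sum_ite_mem, Finset.univ_inter, Finset.sum_const, nsmul_eq_mul]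
  simp_rw [h1]
  rw [Finset.sum_comm]
  exact Finset.sum_congr rfl fun v _ => sum_posP x hx v

lemma exists_top_of_chain (A : Finset (Finset V)) (hA : A.Nonempty)
    (hc : ∀ σ ∈ A, ∀ τ ∈ A, σ ⊆ τ ∨ τ ⊆ σ) : ∃ σ₀ ∈ A, ∀ σ ∈ A, σ ⊆ σ₀ := by
  obtain ⟨σ₀, hσ₀, hmax⟩ := A.exists_maximal hA
  refine ⟨σ₀, hσ₀, fun σ hσ => ?_⟩
  rcases hc σ hσ σ₀ hσ₀ with h | h
  · exact h
  · have : σ = σ₀ := by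
      by_contra hne
      exact hne (Finset.Subset.antisymm (hmax hσ h) h)
    exact this.le


open scoped Classical

noncomputable def fsupp (x : V → ℝ) : Finset V := Finset.univ.filter fun v => x v ≠ 0

lemma mem_fsupp {x : V → ℝ} {v : V} : v ∈ fsupp x ↔ x v ≠ 0 := by
  simp [fsupp]

lemma mem_geomReal_iff (K : AbsSC V) (x : V → ℝ) :
    x ∈ K.geomReal ↔ (∀ v, 0 ≤ x v) ∧ (∑ v, x v) = 1 ∧ fsupp x ∈ K.faces := Iff.rfl

noncomputable def DL (L : AbsSC V) (x : V → ℝ) : ℝ :=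
  ∑ σ : Finset V, (if σ ∈ L.faces then (σ.card : ℝ) * posP σ x else 0)

lemma cont_DL (L : AbsSC V) : Continuous (DL L) := by
  refine continuous_finset_sum _ fun σ _ => ?_
  by_cases h : σ ∈ L.faces
  · simp only [if_pos h]; exact continuous_const.mul (cont_posP σ)
  · simp only [if_neg h]; exact continuous_const

noncomputable def Hfun (L : AbsSC V) (t : ℝ) (x : V → ℝ) : V → ℝ :=
  fun v => ∑ σ : Finset V,
    (if v ∈ σ then ((1 - t) + t * (if σ ∈ L.faces then (DL L x)⁻¹ else 0)) * posP σ x else 0)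

section HfunLemmas
variable {L : AbsSC V} {t : ℝ} {x : V → ℝ}

lemma Hcoef_nonneg (ht0 : 0 ≤ t) (ht1 : t ≤ 1) (hD : 0 < DL L x) (σ : Finset V) :
    0 ≤ ((1 - t) + t * (if σ ∈ L.faces then (DL L x)⁻¹ else 0)) * posP σ x := by
  refine mul_nonneg (add_nonneg (by linarith) (mul_nonneg ht0 ?_)) (posP_nonneg σ x)
  split
  · positivity
  · exact le_rfl

lemma Hfun_nonneg (ht0 : 0 ≤ t) (ht1 : t ≤ 1) (hD : 0 < DL L x) (v : V) :
    0 ≤ Hfun L t x v := by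
  refine Finset.sum_nonneg fun σ _ => ?_
  split
  · exact Hcoef_nonneg ht0 ht1 hD σ
  · exact le_rfl

lemma Hfun_sum (hx : ∀ v, 0 ≤ x v) (hsum : (∑ v, x v) = 1) (hD : 0 < DL L x) :
    (∑ v, Hfun L t x v) = 1 := by
  unfold Hfun
  rw [Finset.sum_comm]
  have h1 : ∀ σ : Finset V,
      (∑ v, if v ∈ σ then ((1 - t) + t * (if σ ∈ L.faces then (DL L x)⁻¹ else 0)) * posP σ x else 0)
      = (1 - t) * ((σ.card : ℝ) * posP σ x)
        + t * (DL L x)⁻¹ * (if σ ∈ L.faces then (σ.card : ℝ) * posP σ x else 0) := by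
    intro σ
    rw [Finset.sum_ite_mem, Finset.univ_inter, Finset.sum_const, nsmul_eq_mul]
    by_cases h : σ ∈ L.faces <;> simp [h] <;> ring
  simp_rw [h1]
  rw [Finset.sum_add_distrib, ← Finset.mul_sum, ← Finset.mul_sum, sum_card_posP x hx, hsum]
  rw [show (∑ σ : Finset V, (if σ ∈ L.faces then (σ.card : ℝ) * posP σ x else 0)) = DL L x from rfl]
  rw [mul_assoc, inv_mul_cancel₀ (ne_of_gt hD)]
  ring

lemma Hfun_supp_subset (ht0 : 0 ≤ t) (ht1 : t ≤ 1) (hD : 0 < DL L x) {v : V}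
    (hv : v ∈ fsupp (Hfun L t x)) : v ∈ fsupp x := by
  rw [mem_fsupp] at hv
  have : ∃ σ : Finset V,
      (if v ∈ σ then ((1 - t) + t * (if σ ∈ L.faces then (DL L x)⁻¹ else 0)) * posP σ x else 0) ≠ 0 := by
    by_contra hcon
    push_neg at hcon
    exact hv (Finset.sum_eq_zero fun σ _ => hcon σ)
  obtain ⟨σ, hσ⟩ := this
  have hvσ : v ∈ σ := by
    by_contra h; exact hσ (if_neg h)
  rw [if_pos hvσ] at hσ
  have hp : posP σ x ≠ 0 := fun h => hσ (by rw [h, mul_zero])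
  have hp' : 0 < posP σ x := lt_of_le_of_ne (posP_nonneg σ x) (Ne.symm hp)
  exact mem_fsupp.2 (ne_of_gt (pos_of_mem_posP hp' hvσ))

lemma Hfun_mem (K : AbsSC V) (hx : x ∈ K.geomReal) (ht0 : 0 ≤ t) (ht1 : t ≤ 1)
    (hD : 0 < DL L x) : Hfun L t x ∈ K.geomReal := by
  obtain ⟨hx1, hx2, hx3⟩ := (mem_geomReal_iff K x).1 hx
  refine (mem_geomReal_iff K _).2 ⟨Hfun_nonneg ht0 ht1 hD, Hfun_sum hx1 hx2 hD, ?_⟩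
  have hsub : fsupp (Hfun L t x) ⊆ fsupp x := fun v hv => Hfun_supp_subset ht0 ht1 hD hv
  have hne : (fsupp (Hfun L t x)).Nonempty := by
    by_contra hcon
    rw [Finset.not_nonempty_iff_eq_empty] at hcon
    have : (∑ v, Hfun L t x v) = 0 := by
      refine Finset.sum_eq_zero fun v _ => ?_
      by_contra h
      exact absurd (mem_fsupp.2 h) (by simp [hcon])
    rw [Hfun_sum hx1 hx2 hD] at this
    exact one_ne_zero this
  exact K.down_closed _ hx3 _ hsub hne

lemma Hfun_zero (hx : ∀ v, 0 ≤ x v) : Hfun L 0 x = x := by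
  funext v
  unfold Hfun
  simp only [sub_zero, zero_mul, add_zero, one_mul]
  exact sum_posP x hx v

lemma Hfun_one_supp (hx : ∀ v, 0 ≤ x v) (hD : 0 < DL L x) :
    fsupp (Hfun L 1 x) ∈ L.faces := by
  set A := Finset.univ.filter (fun σ : Finset V => σ ∈ L.faces ∧ 0 < posP σ x) with hA
  have hAne : A.Nonempty := by
    by_contra hcon
    rw [Finset.not_nonempty_iff_eq_empty] at hcon
    have hD0 : DL L x = 0 := by
      refine Finset.sum_eq_zero fun σ _ => ?_
      by_cases h : σ ∈ L.faces
      · rw [if_pos h]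
        have : ¬ (0 < posP σ x) := by
          intro hp
          have : σ ∈ A := by simp [hA, h, hp]
          simp [hcon] at this
        have : posP σ x = 0 := le_antisymm (not_lt.1 this) (posP_nonneg σ x)
        rw [this, mul_zero]
      · exact if_neg h
    rw [hD0] at hD
    exact lt_irrefl 0 hD
  have hchain : ∀ σ ∈ A, ∀ τ ∈ A, σ ⊆ τ ∨ τ ⊆ σ := by
    intro σ hσ τ hτ
    simp only [hA, Finset.mem_filter] at hσ hτ
    exact posP_chain hσ.2.2 hτ.2.2
  obtain ⟨σ₀, hσ₀A, htop⟩ := exists_top_of_chain A hAne hchain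
  have hσ₀ : σ₀ ∈ L.faces ∧ 0 < posP σ₀ x := by
    simpa [hA] using hσ₀A
  have hsupp : fsupp (Hfun L 1 x) = σ₀ := by
    ext v
    rw [mem_fsupp]
    constructor
    · intro hv
      have : ∃ σ : Finset V, (if v ∈ σ then
          ((1 - 1) + 1 * (if σ ∈ L.faces then (DL L x)⁻¹ else 0)) * posP σ x else 0) ≠ 0 := by
        by_contra hcon
        push_neg at hcon
        exact hv (Finset.sum_eq_zero fun σ _ => hcon σ)
      obtain ⟨σ, hσ⟩ := this
      have hvσ : v ∈ σ := by by_contra h; exact hσ (if_neg h)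
      rw [if_pos hvσ] at hσ
      simp only [sub_self, zero_add, one_mul] at hσ
      have hσL : σ ∈ L.faces := by
        by_contra h
        rw [if_neg h, zero_mul] at hσ
        exact hσ rfl
      rw [if_pos hσL] at hσ
      have hp : 0 < posP σ x := by
        rcases lt_or_eq_of_le (posP_nonneg σ x) with h | h
        · exact h
        · rw [← h, mul_zero] at hσ; exact absurd rfl hσ
      have : σ ∈ A := by simp [hA, hσL, hp]
      exact htop σ this hvσ
    · intro hv
      have hterm : 0 < (if v ∈ σ₀ then
          ((1 - 1) + 1 * (if σ₀ ∈ L.faces then (DL L x)⁻¹ else 0)) * posP σ₀ x else 0) := by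
        rw [if_pos hv, if_pos hσ₀.1]
        simp only [sub_self, zero_add, one_mul]
        exact mul_pos (inv_pos.2 hD) hσ₀.2
      have hle : ∀ σ : Finset V, 0 ≤ (if v ∈ σ then
          ((1 - 1) + 1 * (if σ ∈ L.faces then (DL L x)⁻¹ else 0)) * posP σ x else 0) := by
        intro σ
        split
        · exact Hcoef_nonneg zero_le_one le_rfl hD σ
        · exact le_rfl
      have : 0 < Hfun L 1 x v :=
        lt_of_lt_of_le hterm (Finset.single_le_sum (fun σ _ => hle σ) (Finset.mem_univ σ₀))
      exact ne_of_gt this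
  rw [hsupp]
  exact hσ₀.1

end HfunLemmas

noncomputable def pushF (f : V → V) (x : V → ℝ) : V → ℝ :=
  fun w => ∑ v ∈ Finset.univ.filter (fun v => f v = w), x v

lemma cont_pushF (f : V → V) : Continuous (pushF f) :=
  continuous_pi fun _ => continuous_finset_sum _ fun v _ => continuous_apply v

lemma pushF_nonneg {f : V → V} {x : V → ℝ} (hx : ∀ v, 0 ≤ x v) (w : V) :
    0 ≤ pushF f x w := Finset.sum_nonneg fun v _ => hx v

lemma pushF_sum (f : V → V) (x : V → ℝ) : (∑ w, pushF f x w) = ∑ v, x v := by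
  unfold pushF
  exact Finset.sum_fiberwise _ _ _

lemma pushF_supp {f : V → V} {x : V → ℝ} (hx : ∀ v, 0 ≤ x v) :
    fsupp (pushF f x) = (fsupp x).image f := by
  ext w
  rw [mem_fsupp, Finset.mem_image]
  constructor
  · intro hw
    have : ∃ v ∈ Finset.univ.filter (fun v => f v = w), x v ≠ 0 := by
      by_contra hcon
      push_neg at hcon
      exact hw (Finset.sum_eq_zero hcon)
    obtain ⟨v, hv1, hv2⟩ := this
    exact ⟨v, mem_fsupp.2 hv2, (Finset.mem_filter.1 hv1).2⟩
  · rintro ⟨v, hv, rfl⟩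
    rw [mem_fsupp] at hv
    have hvp : 0 < x v := lt_of_le_of_ne (hx v) (Ne.symm hv)
    have : 0 < pushF f x (f v) := by
      refine lt_of_lt_of_le hvp ?_
      exact Finset.single_le_sum (fun u _ => hx u) (Finset.mem_filter.2 ⟨Finset.mem_univ v, rfl⟩)
    exact ne_of_gt this

lemma pushF_id (x : V → ℝ) : pushF id x = x := by
  funext w
  unfold pushF
  rw [show Finset.univ.filter (fun v => id v = w) = {w} by ext u; simp [eq_comm]]
  simp


lemma fsupp_nonempty_of_sum_one {x : V → ℝ} (h : (∑ v, x v) = 1) : (fsupp x).Nonempty := by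
  by_contra hc
  rw [Finset.not_nonempty_iff_eq_empty] at hc
  have hz : (∑ v, x v) = 0 := by
    refine Finset.sum_eq_zero fun v _ => ?_
    by_contra hnz
    exact absurd (mem_fsupp.2 hnz) (by simp [hc])
  rw [h] at hz
  exact one_ne_zero hz

lemma pushF_const (v₀ : V) (x : V → ℝ) (hsum : (∑ v, x v) = 1) :
    pushF (fun _ => v₀) x = fun w => if w = v₀ then 1 else 0 := by
  funext w
  show (∑ v ∈ Finset.univ.filter (fun v => v₀ = w), x v) = _
  by_cases h : w = v₀
  · rw [if_pos h, Finset.filter_true_of_mem (fun u _ => h.symm), hsum]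
  · rw [if_neg h, Finset.filter_false_of_mem (fun u _ => fun hh => h hh.symm), Finset.sum_empty]

section Contiguity

variable (K L : AbsSC V)

noncomputable def XLset : Set ↥(K.geomReal) := {x | fsupp ((x : ↥(K.geomReal)) : V → ℝ) ∈ L.faces}

noncomputable def inclXL : C(↥(XLset K L), ↥(K.geomReal)) :=
  ⟨fun x => ↑x, continuous_subtype_val⟩

variable {K L}

lemma push_mem_of_simplicial {f : V → V} (hf : AbsSC.IsSimplicial L K f)
    (x : ↥(XLset K L)) : pushF f ((x : ↥(K.geomReal)) : V → ℝ) ∈ K.geomReal := by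
  obtain ⟨h1, h2, _⟩ := (mem_geomReal_iff K _).1 (x : ↥(K.geomReal)).2
  refine (mem_geomReal_iff K _).2 ⟨pushF_nonneg h1, by rw [pushF_sum, h2], ?_⟩
  rw [pushF_supp h1]
  exact hf _ x.2

noncomputable def pushMap (g : V → V)
    (hg : ∀ x : ↥(XLset K L), pushF g ((x : ↥(K.geomReal)) : V → ℝ) ∈ K.geomReal) :
    C(↥(XLset K L), ↥(K.geomReal)) :=
  ⟨fun x => ⟨pushF g ((x : ↥(K.geomReal)) : V → ℝ), hg x⟩,
    Continuous.subtype_mk ((cont_pushF g).comp (continuous_subtype_val.comp continuous_subtype_val)) _⟩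

lemma reach_mem {g : V → V} (hg : AbsSC.ContigClass L K id g) :
    ∀ x : ↥(XLset K L), pushF g ((x : ↥(K.geomReal)) : V → ℝ) ∈ K.geomReal := by
  rcases Relation.ReflTransGen.cases_tail hg with h | ⟨c, _, hstep⟩
  · subst h
    intro x
    rw [pushF_id]
    exact (x : ↥(K.geomReal)).2
  · exact push_mem_of_simplicial hstep.2.1

lemma step_homotopic {f g : V → V}
    (hf : ∀ x : ↥(XLset K L), pushF f ((x : ↥(K.geomReal)) : V → ℝ) ∈ K.geomReal)
    (hg : ∀ x : ↥(XLset K L), pushF g ((x : ↥(K.geomReal)) : V → ℝ) ∈ K.geomReal)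
    (hstep : AbsSC.Contig L K f g) :
    ContinuousMap.Homotopic (pushMap f hf) (pushMap g hg) := by
  have hmem : ∀ (t : unitInterval) (x : ↥(XLset K L)),
      (fun w => (1 - (t:ℝ)) * pushF f ((x : ↥(K.geomReal)) : V → ℝ) w
        + (t:ℝ) * pushF g ((x : ↥(K.geomReal)) : V → ℝ) w) ∈ K.geomReal := by
    intro t x
    obtain ⟨h1, h2, h3⟩ := (mem_geomReal_iff K _).1 (x : ↥(K.geomReal)).2
    have hsum1 : (∑ w, ((1 - (t:ℝ)) * pushF f ((x : ↥(K.geomReal)) : V → ℝ) w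
        + (t:ℝ) * pushF g ((x : ↥(K.geomReal)) : V → ℝ) w)) = 1 := by
      rw [Finset.sum_add_distrib, ← Finset.mul_sum, ← Finset.mul_sum,
        pushF_sum, pushF_sum, h2]
      ring
    refine (mem_geomReal_iff K _).2 ⟨?_, hsum1, ?_⟩
    · intro w
      have e1 := pushF_nonneg (f := f) h1 w
      have e2 := pushF_nonneg (f := g) h1 w
      have e3 := t.2.1
      have e4 := unitInterval.one_minus_nonneg t
      exact add_nonneg (mul_nonneg e4 e1) (mul_nonneg e3 e2)
    · have hsub : fsupp (fun w => (1 - (t:ℝ)) * pushF f ((x : ↥(K.geomReal)) : V → ℝ) w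
          + (t:ℝ) * pushF g ((x : ↥(K.geomReal)) : V → ℝ) w)
          ⊆ (fsupp ((x : ↥(K.geomReal)) : V → ℝ)).image f
            ∪ (fsupp ((x : ↥(K.geomReal)) : V → ℝ)).image g := by
        intro w hw
        rw [mem_fsupp] at hw
        rw [Finset.mem_union, ← pushF_supp h1, ← pushF_supp h1, mem_fsupp, mem_fsupp]
        by_contra hcon
        push_neg at hcon
        rw [hcon.1, hcon.2, mul_zero, mul_zero, add_zero] at hw
        exact hw rfl
      exact K.down_closed _ (hstep.2.2 _ x.2) _ hsub (fsupp_nonempty_of_sum_one hsum1)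
  have hcont : Continuous (fun p : unitInterval × ↥(XLset K L) =>
      (fun w => (1 - (p.1:ℝ)) * pushF f ((p.2 : ↥(K.geomReal)) : V → ℝ) w
        + (p.1:ℝ) * pushF g ((p.2 : ↥(K.geomReal)) : V → ℝ) w : V → ℝ)) := by
    have hc1 : Continuous fun p : unitInterval × ↥(XLset K L) => (p.1 : ℝ) :=
      continuous_subtype_val.comp continuous_fst
    have hc2 : Continuous fun p : unitInterval × ↥(XLset K L) =>
        ((p.2 : ↥(K.geomReal)) : V → ℝ) :=
      continuous_subtype_val.comp (continuous_subtype_val.comp continuous_snd)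
    refine continuous_pi fun w => ?_
    exact ((continuous_const.sub hc1).mul
        ((continuous_apply w).comp ((cont_pushF f).comp hc2))).add
      (hc1.mul ((continuous_apply w).comp ((cont_pushF g).comp hc2)))
  refine ⟨ContinuousMap.Homotopy.mk
    ⟨fun p => ⟨fun w => (1 - (p.1:ℝ)) * pushF f ((p.2 : ↥(K.geomReal)) : V → ℝ) w
        + (p.1:ℝ) * pushF g ((p.2 : ↥(K.geomReal)) : V → ℝ) w, hmem p.1 p.2⟩,
      Continuous.subtype_mk hcont _⟩ ?_ ?_⟩
  · intro x
    apply Subtype.ext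
    funext w
    show (1 - ((0 : unitInterval):ℝ)) * _ + ((0 : unitInterval):ℝ) * _ = _
    rw [Set.Icc.coe_zero]
    show (1 - 0) * pushF f ((x : ↥(K.geomReal)) : V → ℝ) w
        + 0 * pushF g ((x : ↥(K.geomReal)) : V → ℝ) w
        = pushF f ((x : ↥(K.geomReal)) : V → ℝ) w
    ring
  · intro x
    apply Subtype.ext
    funext w
    show (1 - ((1 : unitInterval):ℝ)) * _ + ((1 : unitInterval):ℝ) * _ = _
    rw [Set.Icc.coe_one]
    show (1 - 1) * pushF f ((x : ↥(K.geomReal)) : V → ℝ) w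
        + 1 * pushF g ((x : ↥(K.geomReal)) : V → ℝ) w
        = pushF g ((x : ↥(K.geomReal)) : V → ℝ) w
    ring

end Contiguity

section Contraction

variable {K L : AbsSC V}

lemma contig_homotopic {g : V → V} (hg : AbsSC.ContigClass L K id g) :
    ContinuousMap.Homotopic (inclXL K L) (pushMap g (reach_mem hg)) := by
  induction hg with
  | refl =>
      have : inclXL K L = pushMap id (reach_mem Relation.ReflTransGen.refl) := by
        apply ContinuousMap.ext
        intro x
        apply Subtype.ext
        show ((x : ↥(K.geomReal)) : V → ℝ) = pushF id ((x : ↥(K.geomReal)) : V → ℝ)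
        rw [pushF_id]
      rw [← this]
  | @tail b c hb hstep ih =>
      have hbmem := reach_mem (L := L) (K := K) hb
      have hcmem := reach_mem (L := L) (K := K) (hb.tail hstep)
      exact ih.trans (step_homotopic hbmem hcmem hstep)

noncomputable def eV (K : AbsSC V) (v : V) (hv : {v} ∈ K.faces) : ↥(K.geomReal) := by
  refine ⟨fun w => if w = v then 1 else 0, (mem_geomReal_iff K _).2 ⟨?_, ?_, ?_⟩⟩
  · intro w; split <;> norm_num
  · rw [Finset.sum_ite_eq' Finset.univ v (fun _ => (1:ℝ))]
    simp
  · have : fsupp (fun w => if w = v then (1:ℝ) else 0) = {v} := by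
      ext w
      rw [mem_fsupp, Finset.mem_singleton]
      split <;> simp_all
    rw [this]
    exact hv

lemma categorical_contract (hsub : L.faces ⊆ K.faces)
    {v : V} (hv : {v} ∈ K.faces) (hcc : AbsSC.ContigClass L K id (fun _ => v)) :
    ContinuousMap.Homotopic (inclXL K L) (ContinuousMap.const _ (eV K v hv)) := by
  have h1 := contig_homotopic hcc
  have h2 : pushMap (L := L) (fun _ => v) (reach_mem hcc)
      = ContinuousMap.const _ (eV K v hv) := by
    apply ContinuousMap.ext
    intro x
    apply Subtype.ext
    show pushF (fun _ => v) ((x : ↥(K.geomReal)) : V → ℝ) = _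
    obtain ⟨_, h2, _⟩ := (mem_geomReal_iff K _).1 (x : ↥(K.geomReal)).2
    rw [pushF_const v _ h2]
    rfl
  rw [h2] at h1
  exact h1

end Contraction

section Neighborhood

variable (K L : AbsSC V)

noncomputable def NSet : Set ↥(K.geomReal) :=
  {x | 1/2 < DL L ((x : ↥(K.geomReal)) : V → ℝ)}

lemma NSet_open : IsOpen (NSet K L) :=
  isOpen_lt continuous_const ((cont_DL L).comp continuous_subtype_val)

variable {K L}

lemma DL_eq_one_of_mem (x : ↥(K.geomReal)) (hx : fsupp ((x : V → ℝ)) ∈ L.faces) :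
    DL L ((x : V → ℝ)) = 1 := by
  obtain ⟨h1, h2, h3⟩ := (mem_geomReal_iff K _).1 x.2
  have heq : DL L ((x : V → ℝ)) = ∑ σ : Finset V, (σ.card : ℝ) * posP σ (x : V → ℝ) := by
    refine Finset.sum_congr rfl fun σ _ => ?_
    by_cases h : σ ∈ L.faces
    · rw [if_pos h]
    · rw [if_neg h]
      by_contra hne
      have hp : 0 < posP σ (x : V → ℝ) := by
        rcases lt_or_eq_of_le (posP_nonneg σ (x : V → ℝ)) with hh | hh
        · exact hh
        · rw [← hh, mul_zero] at hne; exact absurd rfl hne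
      obtain ⟨hσne, _⟩ := posP_pos_elim hp
      have hsub : σ ⊆ fsupp ((x : V → ℝ)) := fun u hu =>
        mem_fsupp.2 (ne_of_gt (pos_of_mem_posP hp hu))
      exact h (L.down_closed _ hx _ hsub hσne)
  rw [heq, sum_card_posP _ h1, h2]

lemma cont_Hfun {A : Type*} [TopologicalSpace A] {τ : A → ℝ} {ξ : A → (V → ℝ)}
    (hτ : Continuous τ) (hξ : Continuous ξ) (hD : ∀ a, DL L (ξ a) ≠ 0) :
    Continuous fun a => Hfun L (τ a) (ξ a) := by
  unfold Hfun
  refine continuous_pi fun v => continuous_finset_sum _ fun σ _ => ?_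
  by_cases hv : v ∈ σ
  · simp only [if_pos hv]
    refine Continuous.mul (Continuous.add (continuous_const.sub hτ) (Continuous.mul hτ ?_))
      ((cont_posP σ).comp hξ)
    by_cases hσ : σ ∈ L.faces
    · simp only [if_pos hσ]
      exact Continuous.inv₀ ((cont_DL L).comp hξ) hD
    · simp only [if_neg hσ]
      exact continuous_const
  · simp only [if_neg hv]
    exact continuous_const

lemma NSet_DL_pos (x : ↥(NSet K L)) : 0 < DL L (((x : ↥(K.geomReal)) : V → ℝ)) := by
  have := x.2
  simp only [NSet, Set.mem_setOf_eq] at this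
  linarith

noncomputable def rMap (K L : AbsSC V) : C(↥(NSet K L), ↥(XLset K L)) :=
  ⟨fun x => ⟨⟨Hfun L 1 (((x : ↥(K.geomReal)) : V → ℝ)),
      Hfun_mem K (x : ↥(K.geomReal)).2 zero_le_one le_rfl (NSet_DL_pos x)⟩,
    Hfun_one_supp ((mem_geomReal_iff K _).1 (x : ↥(K.geomReal)).2).1 (NSet_DL_pos x)⟩,
    Continuous.subtype_mk (Continuous.subtype_mk
      (cont_Hfun continuous_const (continuous_subtype_val.comp continuous_subtype_val)
        (fun x => ne_of_gt (NSet_DL_pos x))) _) _⟩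

lemma NSet_contract (hsub : L.faces ⊆ K.faces)
    {v : V} (hv : {v} ∈ K.faces) (hcc : AbsSC.ContigClass L K id (fun _ => v)) :
    ContinuousMap.Homotopic
      (⟨Subtype.val, continuous_subtype_val⟩ : C(↥(NSet K L), ↥(K.geomReal)))
      (ContinuousMap.const _ (eV K v hv)) := by
  have hmemX : ∀ (t : unitInterval) (x : ↥(NSet K L)),
      Hfun L (t : ℝ) (((x : ↥(K.geomReal)) : V → ℝ)) ∈ K.geomReal := fun t x =>
    Hfun_mem K (x : ↥(K.geomReal)).2 t.2.1 t.2.2 (NSet_DL_pos x)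
  have hnn : ∀ x : ↥(NSet K L), ∀ w, 0 ≤ (((x : ↥(K.geomReal)) : V → ℝ)) w := fun x =>
    ((mem_geomReal_iff K _).1 (x : ↥(K.geomReal)).2).1
  refine ContinuousMap.Homotopic.trans
    (g := (inclXL K L).comp (rMap K L)) ?_ ?_
  · refine ⟨ContinuousMap.Homotopy.mk
      ⟨fun p => ⟨Hfun L ((p.1 : ℝ)) (((p.2 : ↥(K.geomReal)) : V → ℝ)), hmemX p.1 p.2⟩, ?_⟩
      ?_ ?_⟩
    · refine Continuous.subtype_mk ?_ _
      exact cont_Hfun (continuous_subtype_val.comp continuous_fst)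
        (continuous_subtype_val.comp (continuous_subtype_val.comp continuous_snd))
        (fun p => ne_of_gt (NSet_DL_pos p.2))
    · intro x
      apply Subtype.ext
      show Hfun L (((0 : unitInterval) : ℝ)) _ = _
      rw [Set.Icc.coe_zero, Hfun_zero (hnn x)]
      rfl
    · intro x
      apply Subtype.ext
      show Hfun L (((1 : unitInterval) : ℝ)) _ = _
      rw [Set.Icc.coe_one]
      rfl
  · have h1 := ContinuousMap.Homotopic.comp
      (categorical_contract hsub hv hcc) (ContinuousMap.Homotopic.refl (rMap K L))
    rw [ContinuousMap.const_comp] at h1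
    exact h1

end Neighborhood

section Assembly

lemma catcover_to_topcover (K : AbsSC V) (n : ℕ) (h : AbsSC.CatCover K n) :
    TopCatCover ↥(K.geomReal) n := by
  obtain ⟨U, hcat, hcover⟩ := h
  refine ⟨fun i => NSet K (U i), fun i => NSet_open K (U i), ?_, ?_⟩
  · intro x
    obtain ⟨h1, h2, h3⟩ := (mem_geomReal_iff K _).1 x.2
    obtain ⟨i, hi⟩ := hcover _ h3
    refine ⟨i, ?_⟩
    show 1/2 < DL (U i) ((x : V → ℝ))
    rw [DL_eq_one_of_mem x hi]
    norm_num
  · intro i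
    obtain ⟨hsub, v, hv, hcc⟩ := hcat i
    exact ⟨eV K v hv, NSet_contract hsub hv hcc⟩

def fullSub (σ : Finset V) : AbsSC V where
  faces := {τ | τ ⊆ σ ∧ τ.Nonempty}
  nonempty_of_mem := fun τ h => h.2
  down_closed := fun τ h ρ hρ hne => ⟨hρ.trans h.1, hne⟩

lemma fullSub_categorical (K : AbsSC V) (σ : Finset V) (hσ : σ ∈ K.faces) :
    AbsSC.Categorical K (fullSub σ) := by
  have hsub : (fullSub σ).faces ⊆ K.faces := fun τ h =>
    K.down_closed σ hσ τ h.1 h.2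
  obtain ⟨v, hvσ⟩ := K.nonempty_of_mem σ hσ
  have hv : {v} ∈ K.faces :=
    K.down_closed σ hσ {v} (Finset.singleton_subset_iff.2 hvσ) ⟨v, Finset.mem_singleton_self v⟩
  refine ⟨hsub, v, hv, Relation.ReflTransGen.single ?_⟩
  refine ⟨?_, ?_, ?_⟩
  · intro τ hτ
    rw [Finset.image_id]
    exact hsub hτ
  · intro τ hτ
    rw [Finset.image_const hτ.2 v]
    exact hv
  · intro τ hτ
    rw [Finset.image_id, Finset.image_const hτ.2 v]
    refine K.down_closed σ hσ _ ?_ ?_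
    · exact Finset.union_subset hτ.1 (Finset.singleton_subset_iff.2 hvσ)
    · exact Finset.Nonempty.mono Finset.subset_union_left hτ.2

lemma catcover_exists (K : AbsSC V) (hK : K.faces.Nonempty) : ∃ n, AbsSC.CatCover K n := by
  obtain ⟨σs, hσs⟩ := hK
  set N := Fintype.card (Finset V) with hN
  set e := Fintype.equivFin (Finset V) with he
  refine ⟨N, fun i => fullSub (if h : (i : ℕ) < N then
      (if e.symm ⟨i, h⟩ ∈ K.faces then e.symm ⟨i, h⟩ else σs) else σs), ?_, ?_⟩
  · intro i
    refine fullSub_categorical K _ ?_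
    split
    · split
      · assumption
      · exact hσs
    · exact hσs
  · intro σ hσ
    refine ⟨⟨(e σ : ℕ), lt_trans (e σ).2 (Nat.lt_succ_self N)⟩, ?_⟩
    show σ ∈ (fullSub (if h : ((⟨(e σ : ℕ), lt_trans (e σ).2 (Nat.lt_succ_self N)⟩ : Fin (N+1)) : ℕ) < N then
      (if e.symm ⟨((⟨(e σ : ℕ), lt_trans (e σ).2 (Nat.lt_succ_self N)⟩ : Fin (N+1)) : ℕ), h⟩ ∈ K.faces then e.symm ⟨((⟨(e σ : ℕ), lt_trans (e σ).2 (Nat.lt_succ_self N)⟩ : Fin (N+1)) : ℕ), h⟩ else σs)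
      else σs)).faces
    split
    · next h =>
        have h2 : e.symm ⟨((⟨(e σ : ℕ), lt_trans (e σ).2 (Nat.lt_succ_self N)⟩ : Fin (N+1)) : ℕ), h⟩ = σ := by
          rw [show (⟨((⟨(e σ : ℕ), lt_trans (e σ).2 (Nat.lt_succ_self N)⟩ : Fin (N+1)) : ℕ), h⟩ : Fin N) = e σ from Fin.ext rfl]
          exact e.symm_apply_apply σ
        rw [h2, if_pos hσ]
        exact ⟨Finset.Subset.refl σ, K.nonempty_of_mem σ hσ⟩
    · next h => exact absurd (e σ).2 h

end Assembly
end AuxPrivate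
/-- `cat |K| ≤ scat K`. -/
theorem topcat_geomReal_le_scat {V : Type} [DecidableEq V] [Fintype V]
    (K : AbsSC V) : topcat (AbsSC.geomReal K) ≤ AbsSC.scat K := by
  classical
  by_cases hK : K.faces.Nonempty
  · have hS : {n | AbsSC.CatCover K n}.Nonempty := catcover_exists K hK
    have h1 : AbsSC.CatCover K (AbsSC.scat K) := Nat.sInf_mem hS
    exact Nat.sInf_le (catcover_to_topcover K _ h1)
  · have hT : {n | TopCatCover ↥(K.geomReal) n} = ∅ := by
      ext n
      simp only [Set.mem_setOf_eq, Set.mem_empty_iff_false, iff_false]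
      rintro ⟨U, _, _, hcontr⟩
      obtain ⟨x₀, _⟩ := hcontr 0
      exact hK ⟨_, ((mem_geomReal_iff K _).1 x₀.2).2.2⟩
    have : topcat ↥(K.geomReal) = 0 := by
      unfold topcat
      rw [hT, Nat.sInf_empty]
    rw [this]
    exact Nat.zero_le _
end

section
/- For finite simplicial complexes K and L, scat(K × L) + 1 ≤ (scat K + 1)(scat L + 1), where K × L denotes the categorical product of simplicial complexes. -/
namespace AbsSC

variable {V W V' W' : Type} [DecidableEq V] [DecidableEq W]

/-- Auxiliary: the full simplex on a vertex set. -/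
def fullOn (σ : Finset V) : AbsSC V where
  faces := {τ | τ.Nonempty ∧ τ ⊆ σ}
  nonempty_of_mem := fun τ h => h.1
  down_closed := fun τ h ρ hρ hne => ⟨hne, hρ.trans h.2⟩

lemma categorical_fullOn (K : AbsSC V) (σ : Finset V) (hσ : σ ∈ K.faces) :
    Categorical K (fullOn σ) := by
  obtain ⟨v, hv⟩ := K.nonempty_of_mem σ hσ
  have hvK : {v} ∈ K.faces :=
    K.down_closed σ hσ {v} (Finset.singleton_subset_iff.2 hv) ⟨v, Finset.mem_singleton_self v⟩
  refine ⟨fun τ hτ => K.down_closed σ hσ τ hτ.2 hτ.1, v, hvK, ?_⟩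
  refine Relation.ReflTransGen.single ⟨?_, ?_, ?_⟩
  · intro τ hτ
    rw [Finset.image_id]
    exact K.down_closed σ hσ τ hτ.2 hτ.1
  · intro τ hτ
    rw [Finset.image_const hτ.1]
    exact hvK
  · intro τ hτ
    rw [Finset.image_id, Finset.image_const hτ.1]
    refine K.down_closed σ hσ _ ?_ ⟨v, by simp⟩
    exact Finset.union_subset hτ.2 (Finset.singleton_subset_iff.2 hv)

lemma exists_catCover [Fintype V] (K : AbsSC V) (h : K.faces.Nonempty) :
    ∃ n, CatCover K n := by
  have hfin : K.faces.Finite := Set.toFinite _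
  have hpos : 0 < hfin.toFinset.card :=
    Finset.card_pos.2 (by simpa [Set.Finite.toFinset_nonempty] using h)
  refine ⟨hfin.toFinset.card - 1, ?_⟩
  have hN : hfin.toFinset.card - 1 + 1 = hfin.toFinset.card := Nat.succ_pred_eq_of_pos hpos
  have hmem : ∀ x : hfin.toFinset, (x : Finset V) ∈ K.faces := fun x =>
    hfin.mem_toFinset.1 x.2
  refine ⟨fun i => fullOn ((hfin.toFinset.equivFin.symm (Fin.cast hN i)) : Finset V),
    fun i => categorical_fullOn K _ (hmem _), ?_⟩
  intro σ hσ
  have hσs : σ ∈ hfin.toFinset := hfin.mem_toFinset.2 hσ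
  refine ⟨Fin.cast hN.symm (hfin.toFinset.equivFin ⟨σ, hσs⟩), ?_⟩
  show σ ∈ (fullOn ((hfin.toFinset.equivFin.symm
    (hfin.toFinset.equivFin ⟨σ, hσs⟩)) : Finset V)).faces
  rw [Equiv.symm_apply_apply]
  exact ⟨K.nonempty_of_mem σ hσ, subset_rfl⟩

lemma categorical_prod {K : AbsSC V} {L : AbsSC W} {A : AbsSC V} {B : AbsSC W}
    (hA : Categorical K A) (hB : Categorical L B) :
    Categorical (K.prod L) (A.prod B) := by
  obtain ⟨hAsub, v, hv, hchainA⟩ := hA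
  obtain ⟨hBsub, w, hw, hchainB⟩ := hB
  refine ⟨fun σ hσ => ⟨hσ.1, hAsub hσ.2.1, hBsub hσ.2.2⟩, (v, w), ?_, ?_⟩
  · exact ⟨⟨(v, w), Finset.mem_singleton_self _⟩, by simpa using hv, by simpa using hw⟩
  · have step1 : ContigClass (A.prod B) (K.prod L)
        (fun p : V × W => (id p.1, p.2)) (fun p : V × W => ((fun _ => v) p.1, p.2)) := by
      refine Relation.ReflTransGen.lift (fun (f : V → V) => fun p : V × W => (f p.1, p.2)) ?_ _ _ hchainA
      rintro f g ⟨hf, hg, hfg⟩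
      have key : ∀ (h : V → V) (σ : Finset (V × W)),
          (σ.image (fun p : V × W => (h p.1, p.2))).image Prod.fst
            = (σ.image Prod.fst).image h ∧
          (σ.image (fun p : V × W => (h p.1, p.2))).image Prod.snd
            = σ.image Prod.snd := by
        intro h σ
        constructor
        · rw [Finset.image_image, Finset.image_image]; rfl
        · rw [Finset.image_image]; rfl
      refine ⟨?_, ?_, ?_⟩
      · intro σ hσ
        exact ⟨hσ.1.image _, (key f σ).1 ▸ hf _ hσ.2.1, (key f σ).2 ▸ hBsub hσ.2.2⟩
      · intro σ hσ
        exact ⟨hσ.1.image _, (key g σ).1 ▸ hg _ hσ.2.1, (key g σ).2 ▸ hBsub hσ.2.2⟩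
      · intro σ hσ
        refine ⟨(hσ.1.image _).mono Finset.subset_union_left, ?_, ?_⟩
        · rw [Finset.image_union, (key f σ).1, (key g σ).1]
          exact hfg _ hσ.2.1
        · rw [Finset.image_union, (key f σ).2, (key g σ).2, Finset.union_self]
          exact hBsub hσ.2.2
    have step2 : ContigClass (A.prod B) (K.prod L)
        (fun p : V × W => (v, id p.2)) (fun p : V × W => (v, (fun _ => w) p.2)) := by
      refine Relation.ReflTransGen.lift (fun (f : W → W) => fun p : V × W => (v, f p.2)) ?_ _ _ hchainB
      rintro f g ⟨hf, hg, hfg⟩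
      have key : ∀ (h : W → W) (σ : Finset (V × W)) (_ : σ.Nonempty),
          (σ.image (fun p : V × W => (v, h p.2))).image Prod.fst = {v} ∧
          (σ.image (fun p : V × W => (v, h p.2))).image Prod.snd
            = (σ.image Prod.snd).image h := by
        intro h σ hne
        constructor
        · rw [Finset.image_image]
          exact Finset.image_const hne v
        · rw [Finset.image_image, Finset.image_image]; rfl
      refine ⟨?_, ?_, ?_⟩
      · intro σ hσ
        exact ⟨hσ.1.image _, (key f σ hσ.1).1 ▸ hv, (key f σ hσ.1).2 ▸ hf _ hσ.2.2⟩
      · intro σ hσ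
        exact ⟨hσ.1.image _, (key g σ hσ.1).1 ▸ hv, (key g σ hσ.1).2 ▸ hg _ hσ.2.2⟩
      · intro σ hσ
        refine ⟨(hσ.1.image _).mono Finset.subset_union_left, ?_, ?_⟩
        · rw [Finset.image_union, (key f σ hσ.1).1, (key g σ hσ.1).1, Finset.union_self]
          exact hv
        · rw [Finset.image_union, (key f σ hσ.1).2, (key g σ hσ.1).2]
          exact hfg _ hσ.2.2
    exact Relation.ReflTransGen.trans step1 step2

lemma scat_eq_zero_of_empty (K : AbsSC V) (h : K.faces = ∅) : scat K = 0 := by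
  have he : {n | CatCover K n} = ∅ := by
    ext n
    simp only [Set.mem_setOf_eq, Set.mem_empty_iff_false, iff_false]
    rintro ⟨U, hU, -⟩
    obtain ⟨-, v, hv, -⟩ := hU 0
    rw [h] at hv
    exact hv
  rw [scat, he, Nat.sInf_empty]

end AbsSC

/-- `scat (K × L) + 1 ≤ (scat K + 1)(scat L + 1)` for the
categorical product. -/
theorem scat_prod_le {V W : Type} [DecidableEq V] [DecidableEq W]
    [Fintype V] [Fintype W] (K : AbsSC V) (L : AbsSC W) :
    AbsSC.scat (K.prod L) + 1 ≤ (AbsSC.scat K + 1) * (AbsSC.scat L + 1) := by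
  open AbsSC in
  by_cases hK : K.faces.Nonempty
  · by_cases hL : L.faces.Nonempty
    · have hcK : CatCover K (scat K) := Nat.sInf_mem (exists_catCover K hK)
      have hcL : CatCover L (scat L) := Nat.sInf_mem (exists_catCover L hL)
      obtain ⟨U, hU, hUcov⟩ := hcK
      obtain ⟨U', hU', hU'cov⟩ := hcL
      have hpos : 0 < (scat K + 1) * (scat L + 1) := by positivity
      have hN : (scat K + 1) * (scat L + 1) - 1 + 1 = (scat K + 1) * (scat L + 1) :=
        Nat.succ_pred_eq_of_pos hpos
      have hcover : CatCover (K.prod L) ((scat K + 1) * (scat L + 1) - 1) := by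
        refine ⟨fun k =>
          (U (finProdFinEquiv.symm (Fin.cast hN k)).1).prod
            (U' (finProdFinEquiv.symm (Fin.cast hN k)).2),
          fun k => categorical_prod (hU _) (hU' _), ?_⟩
        intro σ hσ
        obtain ⟨i, hi⟩ := hUcov _ hσ.2.1
        obtain ⟨j, hj⟩ := hU'cov _ hσ.2.2
        refine ⟨Fin.cast hN.symm (finProdFinEquiv (i, j)), ?_⟩
        show σ ∈ ((U (finProdFinEquiv.symm (finProdFinEquiv (i, j))).1).prod
          (U' (finProdFinEquiv.symm (finProdFinEquiv (i, j))).2)).faces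
        rw [Equiv.symm_apply_apply]
        exact ⟨hσ.1, hi, hj⟩
      have hle : scat (K.prod L) ≤ (scat K + 1) * (scat L + 1) - 1 := Nat.sInf_le hcover
      have := Nat.add_le_add_right hle 1
      rwa [hN] at this
    · have hLe : L.faces = ∅ := Set.not_nonempty_iff_eq_empty.1 hL
      have hpe : (K.prod L).faces = ∅ := by
        ext σ
        simp only [Set.mem_empty_iff_false, iff_false]
        intro hσ
        have := hσ.2.2
        rw [hLe] at this
        exact this
      rw [scat_eq_zero_of_empty _ hpe, Nat.succ_le_iff]
      positivity
  · have hKe : K.faces = ∅ := Set.not_nonempty_iff_eq_empty.1 hK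
    have hpe : (K.prod L).faces = ∅ := by
      ext σ
      simp only [Set.mem_empty_iff_false, iff_false]
      intro hσ
      have := hσ.2.1
      rw [hKe] at this
      exact this
    rw [scat_eq_zero_of_empty _ hpe, Nat.succ_le_iff]
    positivity
end
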